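/- arXiv:1809.02221 — 8 statements merged into one kernel-verified Lean document; each statement's English description precedes it below -/
import Mathlib

section
/- Let α > 1, τ₀ ≥ 1, and σ_{n+1} = τ_{n+1} - τ_n > 0 with τ_n nondecreasing. If the series ∑_{n≥0} σ_{n+1}/τ_n^α converges, then limsup_{n→∞} α^{-n} log τ_n < ∞. -/
open Filter Real

/-- if α > 1, τ₀ ≥ 1, τ strictly increasing, and
∑ σ_{n+1}/τ_n^α converges, then limsup α^{-n} log τ_n < ∞. -/
theorem stmt1 (α : ℝ) (hα : 1 < α) (τ : ℕ → ℝ) (hτ0 : 1 ≤ τ 0)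
    (hmono : StrictMono τ)
    (hsum : Summable (fun n => (τ (n + 1) - τ n) / (τ n) ^ α)) :
    ∃ C : ℝ, ∀ᶠ n in Filter.atTop, Real.log (τ n) / α ^ n ≤ C := by
  have hα0 : (0:ℝ) < α := by linarith
  have hτ1 : ∀ n, 1 ≤ τ n := fun n => hτ0.trans (hmono.monotone (Nat.zero_le n))
  have hτpos : ∀ n, 0 < τ n := fun n => lt_of_lt_of_le one_pos (hτ1 n)
  have hev : ∀ᶠ n in atTop, (τ (n + 1) - τ n) / (τ n) ^ α < 1 :=
    hsum.tendsto_atTop_zero.eventually_lt_const one_pos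
  obtain ⟨k, hk⟩ := eventually_atTop.mp hev
  set c : ℝ := (2:ℝ) ^ ((1:ℝ)/(α-1)) with hc
  have hcpos : (0:ℝ) < c := Real.rpow_pos_of_pos (by norm_num) _
  have hc1 : (1:ℝ) ≤ c := Real.one_le_rpow one_le_two (one_div_nonneg.mpr (by linarith))
  have hcpow : c ^ (α - 1) = 2 := by
    rw [hc, ← Real.rpow_mul (by norm_num), one_div_mul_cancel (by linarith : α - 1 ≠ 0),
      Real.rpow_one]
  have key : ∀ n, k ≤ n → c * τ (n + 1) ≤ (c * τ n) ^ α := by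
    intro n hn
    have hp : (0:ℝ) < τ n ^ α := Real.rpow_pos_of_pos (hτpos n) α
    have h1 : τ (n + 1) - τ n < τ n ^ α := by
      have := hk n hn
      calc τ (n + 1) - τ n = (τ (n + 1) - τ n) / (τ n) ^ α * (τ n) ^ α := by
            field_simp
        _ < 1 * (τ n) ^ α := by exact mul_lt_mul_of_pos_right this hp
        _ = τ n ^ α := one_mul _
    have h2 : τ n ≤ τ n ^ α := by
      nth_rewrite 1 [← Real.rpow_one (τ n)]
      exact Real.rpow_le_rpow_of_exponent_le (hτ1 n) hα.le
    have h3 : τ (n + 1) ≤ 2 * τ n ^ α := by linarith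
    have h4 : (c * τ n) ^ α = c ^ α * τ n ^ α := Real.mul_rpow hcpos.le (hτpos n).le
    have h5 : c ^ α = 2 * c := by
      have h6 : c ^ α = c ^ (α - 1) * c ^ (1:ℝ) := by
        rw [← Real.rpow_add hcpos]; ring_nf
      rw [h6, hcpow, Real.rpow_one]
    rw [h4, h5]
    have h7 : c * τ (n + 1) ≤ c * (2 * τ n ^ α) :=
      mul_le_mul_of_nonneg_left h3 hcpos.le
    linarith
  have hLnn : 0 ≤ Real.log (c * τ k) :=
    Real.log_nonneg (one_le_mul_of_one_le_of_one_le hc1 (hτ1 k))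
  have ind : ∀ m, Real.log (c * τ (k + m)) ≤ α ^ m * Real.log (c * τ k) := by
    intro m
    induction m with
    | zero => simp
    | succ m ih =>
      have hkey := key (k + m) (Nat.le_add_right k m)
      have hlog : Real.log (c * τ (k + (m + 1))) ≤ Real.log ((c * τ (k + m)) ^ α) := by
        exact Real.log_le_log (mul_pos hcpos (hτpos _)) hkey
      rw [Real.log_rpow (mul_pos hcpos (hτpos _))] at hlog
      calc Real.log (c * τ (k + (m + 1))) ≤ α * Real.log (c * τ (k + m)) := hlog
        _ ≤ α * (α ^ m * Real.log (c * τ k)) := mul_le_mul_of_nonneg_left ih hα0.le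
        _ = α ^ (m + 1) * Real.log (c * τ k) := by ring
  refine ⟨Real.log (c * τ k) / α ^ k, eventually_atTop.mpr ⟨k, ?_⟩⟩
  intro n hn
  obtain ⟨m, rfl⟩ := Nat.exists_eq_add_of_le hn
  have h1 : Real.log (τ (k + m)) ≤ Real.log (c * τ (k + m)) := by
    apply Real.log_le_log (hτpos _)
    exact le_mul_of_one_le_left (hτpos _).le hc1
  have h2 := (h1.trans (ind m))
  rw [div_le_div_iff₀ (by positivity) (by positivity)]
  calc Real.log (τ (k + m)) * α ^ k ≤ (α ^ m * Real.log (c * τ k)) * α ^ k :=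
        mul_le_mul_of_nonneg_right h2 (by positivity)
    _ = Real.log (c * τ k) * α ^ (k + m) := by rw [pow_add]; ring
end

section
/- Let α > 1, τ₀ ≥ 1, σ_n = τ_n - τ_{n-1} ≥ 1, ρ_n = σ_{n+1}/τ_n → ∞, and suppose lim α^{-n} log τ_n = 0. If λ_n = σ_{n+1} σ_{n-1}^α / σ_n^{α+1} converges to a limit λ ∈ [0, ∞], then λ = 0. -/
open Filter

private lemma step_lemma (α : ℝ) (hα : 0 < α) (a b c t δ : ℝ)
    (ha : 0 < a) (hb : 0 < b) (hc : 0 < c) (ht : 0 < t)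
    (hab : a ≤ t) (htb : t ≤ b) (hδ : 0 < δ)
    (h : δ ≤ c * a ^ α / b ^ (α + 1)) :
    δ / 2 * (b / t) ^ α ≤ c / (t + b) := by
  have hbpow : (0:ℝ) < b ^ (α + 1) := Real.rpow_pos_of_pos hb _
  have hT : (0:ℝ) < t ^ α := Real.rpow_pos_of_pos ht _
  have hB : (0:ℝ) < b ^ α := Real.rpow_pos_of_pos hb _
  have h1 : δ * b ^ (α + 1) ≤ c * a ^ α := (le_div_iff₀ hbpow).mp h
  have h2 : a ^ α ≤ t ^ α := Real.rpow_le_rpow ha.le hab hα.le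
  have h3 : b ^ (α + 1) = b ^ α * b := by
    rw [Real.rpow_add hb, Real.rpow_one]
  have hkey : δ / 2 * (b ^ α / t ^ α) * (t + b) ≤ c := by
    have h4 : δ / 2 * b ^ α * (t + b) ≤ c * t ^ α := by
      nlinarith [mul_le_mul_of_nonneg_left h2 hc.le,
        mul_le_mul_of_nonneg_left htb (mul_pos (div_pos hδ two_pos) hB).le]
    calc δ / 2 * (b ^ α / t ^ α) * (t + b)
        = (δ / 2 * b ^ α * (t + b)) / t ^ α := by ring
      _ ≤ (c * t ^ α) / t ^ α := by gcongr
      _ = c := by field_simp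
  rw [Real.div_rpow hb.le ht.le, le_div_iff₀ (by linarith)]
  exact hkey

private lemma key_aux (α : ℝ) (hα : 1 < α) (τ : ℕ → ℝ) (hτ0 : 1 ≤ τ 0)
    (hinc : ∀ n, 1 ≤ τ (n + 1) - τ n)
    (hρ : Tendsto (fun n => (τ (n + 1) - τ n) / τ n) atTop atTop)
    (hθ : Tendsto (fun n => Real.log (τ n) / α ^ n) atTop (nhds 0))
    (δ : ℝ) (hδ : 0 < δ)
    (hev : ∀ᶠ n in atTop, δ ≤ (τ (n + 3) - τ (n + 2)) * (τ (n + 1) - τ n) ^ α /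
        (τ (n + 2) - τ (n + 1)) ^ (α + 1)) : False := by
  have hα0 : (0:ℝ) < α := lt_trans one_pos hα
  have hτ1 : ∀ n, 1 ≤ τ n := by
    intro n; induction n with
    | zero => exact hτ0
    | succ k ih => have := hinc k; linarith
  have hτpos : ∀ n, 0 < τ n := fun n => lt_of_lt_of_le one_pos (hτ1 n)
  have hσpos : ∀ n, 0 < τ (n + 1) - τ n := fun n => lt_of_lt_of_le one_pos (hinc n)
  set ρ : ℕ → ℝ := fun n => (τ (n + 1) - τ n) / τ n with hρdef
  have hρpos : ∀ n, 0 < ρ n := fun n => div_pos (hσpos n) (hτpos n)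
  -- step: eventually ρ(n+2) ≥ (δ/2) ρ(n+1)^α
  obtain ⟨N₁, hN₁⟩ := (hρ.eventually_ge_atTop 1).exists_forall_of_atTop
  obtain ⟨N₂, hN₂⟩ := hev.exists_forall_of_atTop
  set N := max N₁ N₂ with hN
  have hstep : ∀ n ≥ N, δ / 2 * ρ (n + 1) ^ α ≤ ρ (n + 2) := by
    intro n hn
    have h1 : (1:ℝ) ≤ ρ (n + 1) := hN₁ (n + 1) (le_trans (le_max_left _ _) (le_of_lt (Nat.lt_succ_of_le hn)))
    have h2 := hN₂ n (le_trans (le_max_right _ _) hn)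
    have htb : τ (n + 1) ≤ τ (n + 2) - τ (n + 1) := by
      have := (one_le_div (hτpos (n + 1))).mp h1
      linarith
    have hab : τ (n + 1) - τ n ≤ τ (n + 1) := by have := hτpos n; linarith
    have := step_lemma α hα0 (τ (n + 1) - τ n) (τ (n + 2) - τ (n + 1))
      (τ (n + 3) - τ (n + 2)) (τ (n + 1)) δ (hσpos n) (hσpos (n + 1)) (hσpos (n + 2))
      (hτpos (n + 1)) hab htb hδ h2
    have heq : τ (n + 1) + (τ (n + 2) - τ (n + 1)) = τ (n + 2) := by ring
    simp only [hρdef]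
    rw [heq] at this
    exact this
  -- logs
  set x : ℕ → ℝ := fun n => Real.log (ρ n) with hxdef
  set L : ℝ := Real.log (δ / 2) with hLdef
  set C : ℝ := L / (α - 1) with hCdef
  have hne : α - 1 ≠ 0 := by linarith
  have hxstep : ∀ n ≥ N + 1, α * x n + L ≤ x (n + 1) := by
    intro m hm
    rcases Nat.exists_eq_add_of_le hm with ⟨k, rfl⟩
    have hs := hstep (N + k) (Nat.le_add_right N k)
    have hpos1 : (0:ℝ) < δ / 2 * ρ (N + k + 1) ^ α :=
      mul_pos (by linarith) (Real.rpow_pos_of_pos (hρpos _) _)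
    have hlog := Real.log_le_log hpos1 hs
    rw [Real.log_mul (by linarith) (ne_of_gt (Real.rpow_pos_of_pos (hρpos _) _)),
      Real.log_rpow (hρpos _)] at hlog
    have e1 : N + 1 + k = N + k + 1 := by ring
    have e2 : N + 1 + k + 1 = N + k + 2 := by ring
    rw [e1]
    show α * x (N + k + 1) + L ≤ x (N + k + 2)
    simp only [hxdef, hLdef]
    linarith
  have hx : Tendsto x atTop atTop := Real.tendsto_log_atTop.comp hρ
  -- pick M ≥ N+1 with x M + C ≥ 1
  obtain ⟨M, hM1, hM2⟩ := ((hx.eventually_ge_atTop (1 - C)).and (eventually_ge_atTop (N + 1))).exists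
  have hyM : (1:ℝ) ≤ x M + C := by linarith
  have hgrow : ∀ k, α ^ k ≤ x (M + k) + C := by
    intro k
    induction k with
    | zero => simpa using hyM
    | succ j ih =>
      have hMj : M + j ≥ N + 1 := le_trans hM2 (Nat.le_add_right M j)
      have := hxstep (M + j) hMj
      have hαC : α * (x (M + j) + C) = α * x (M + j) + L + C := by
        rw [hCdef]
        field_simp
        ring
      calc α ^ (j + 1) = α * α ^ j := by ring
        _ ≤ α * (x (M + j) + C) := by
            apply mul_le_mul_of_nonneg_left ih hα0.le
        _ = α * x (M + j) + L + C := hαC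
        _ ≤ x (M + j + 1) + C := by linarith
  -- τ lower bound
  have hτlog : ∀ k, x k ≤ Real.log (τ (k + 1)) := by
    intro k
    apply Real.log_le_log (hρpos k)
    calc ρ k = (τ (k + 1) - τ k) / τ k := rfl
      _ ≤ τ (k + 1) - τ k := by
          rw [div_le_iff₀ (hτpos k)]
          nlinarith [hτ1 k, hσpos k]
      _ ≤ τ (k + 1) := by have := hτpos k; linarith
  -- contradiction with hθ
  have hlow : ∀ᶠ k in atTop, 1 / α ^ (M + 1) - C / α ^ k ≤ Real.log (τ k) / α ^ k := by
    filter_upwards [eventually_ge_atTop (M + 1)] with k hk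
    rcases Nat.exists_eq_add_of_le hk with ⟨j, rfl⟩
    have h1 : α ^ j ≤ x (M + j) + C := hgrow j
    have h2 : x (M + j) ≤ Real.log (τ (M + j + 1)) := hτlog (M + j)
    have hpk : (0:ℝ) < α ^ (M + 1 + j) := pow_pos hα0 _
    have e1 : M + 1 + j = M + j + 1 := by ring
    have hτk : α ^ j - C ≤ Real.log (τ (M + 1 + j)) := by
      rw [e1]; linarith
    have hM1pos : (0:ℝ) < α ^ (M + 1) := pow_pos hα0 _
    have hjpos : (0:ℝ) < α ^ j := pow_pos hα0 _
    calc 1 / α ^ (M + 1) - C / α ^ (M + 1 + j)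
        = (α ^ j - C) / α ^ (M + 1 + j) := by
          rw [pow_add]
          field_simp
          ring
      _ ≤ Real.log (τ (M + 1 + j)) / α ^ (M + 1 + j) := by gcongr
  have hpowinf : Tendsto (fun k : ℕ => α ^ k) atTop atTop :=
    tendsto_pow_atTop_atTop_of_one_lt hα
  have h0 : Tendsto (fun k : ℕ => C / α ^ k) atTop (nhds 0) :=
    hpowinf.const_div_atTop C
  have hg : Tendsto (fun k : ℕ => 1 / α ^ (M + 1) - C / α ^ k) atTop
      (nhds (1 / α ^ (M + 1))) := by
    simpa using (tendsto_const_nhds.sub h0)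
  have hfin : 1 / α ^ (M + 1) ≤ (0:ℝ) := le_of_tendsto_of_tendsto hg hθ hlow
  have : (0:ℝ) < 1 / α ^ (M + 1) := by positivity
  linarith

/-- subcritical regime with ρ_n → ∞: if λ_n = σ_{n+1}σ_{n-1}^α/σ_n^{α+1}
converges (to a finite limit or to ∞), the limit must be 0. -/
theorem stmt4 (α : ℝ) (hα : 1 < α) (τ : ℕ → ℝ) (hτ0 : 1 ≤ τ 0)
    (hinc : ∀ n, 1 ≤ τ (n + 1) - τ n)
    (hρ : Tendsto (fun n => (τ (n + 1) - τ n) / τ n) atTop atTop)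
    (hθ : Tendsto (fun n => Real.log (τ n) / α ^ n) atTop (nhds 0)) :
    (¬ Tendsto (fun n => (τ (n + 3) - τ (n + 2)) * (τ (n + 1) - τ n) ^ α /
        (τ (n + 2) - τ (n + 1)) ^ (α + 1)) atTop atTop) ∧
    ∀ l : ℝ, Tendsto (fun n => (τ (n + 3) - τ (n + 2)) * (τ (n + 1) - τ n) ^ α /
        (τ (n + 2) - τ (n + 1)) ^ (α + 1)) atTop (nhds l) → l = 0 := by
  have hσpos : ∀ n, 0 < τ (n + 1) - τ n := fun n => lt_of_lt_of_le one_pos (hinc n)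
  constructor
  · intro h
    exact key_aux α hα τ hτ0 hinc hρ hθ 1 one_pos (h.eventually_ge_atTop 1)
  · intro l hl
    have hl0 : 0 ≤ l := by
      apply ge_of_tendsto hl
      filter_upwards with n
      exact div_nonneg (mul_nonneg (hσpos (n + 2)).le (Real.rpow_nonneg (hσpos n).le _))
        (Real.rpow_nonneg (hσpos (n + 1)).le _)
    rcases eq_or_lt_of_le hl0 with h | h
    · exact h.symm
    · exfalso
      refine key_aux α hα τ hτ0 hinc hρ hθ (l / 2) (by linarith) ?_
      exact hl.eventually (eventually_ge_nhds (by linarith))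
end

section
/- Let α > 1 and θ > 0, and set φ_n = τ_n e^{-θ α^n} where (τ_n) is a positive sequence with lim α^{-n} log τ_n = θ. If ∑_{n≥0} φ_{n+1}/φ_n^α < ∞ then (φ_n) is unbounded. -/
open Filter

/-- critical regime: with φ_n = τ_n e^{-θα^n}, convergence of
∑ φ_{n+1}/φ_n^α forces (φ_n) to be unbounded. -/
theorem stmt6 (α θ : ℝ) (hα : 1 < α) (hθ : 0 < θ) (τ : ℕ → ℝ) (hτ : ∀ n, 0 < τ n)
    (hlim : Tendsto (fun n => Real.log (τ n) / α ^ n) atTop (nhds θ))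
    (hsum : Summable (fun n => (τ (n + 1) * Real.exp (-θ * α ^ (n + 1))) /
      (τ n * Real.exp (-θ * α ^ n)) ^ α)) :
    ¬ BddAbove (Set.range (fun n => τ n * Real.exp (-θ * α ^ n))) := by
  intro hbdd
  have hα0 : (0:ℝ) < α := lt_trans one_pos hα
  set φ : ℕ → ℝ := fun n => τ n * Real.exp (-θ * α ^ n) with hφdef
  have hφpos : ∀ n, 0 < φ n := fun n => mul_pos (hτ n) (Real.exp_pos _)
  obtain ⟨c, hc⟩ := hbdd
  have hc' : ∀ n, φ n ≤ c := fun n => hc ⟨n, rfl⟩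
  have hcpos : 0 < c := lt_of_lt_of_le (hφpos 0) (hc' 0)
  set r : ℝ := min (1 / (2 * c)) 1 with hrdef
  have hrpos : 0 < r := lt_min (by positivity) one_pos
  have hrc : r * c < 1 := by
    have : r * c ≤ (1 / (2 * c)) * c := by
      apply mul_le_mul_of_nonneg_right (min_le_left _ _) hcpos.le
    have h2 : (1 / (2 * c)) * c = 1 / 2 := by field_simp
    linarith
  set ε : ℝ := r ^ (α - 1) with hεdef
  have hεpos : 0 < ε := Real.rpow_pos_of_pos hrpos _
  -- summable ⇒ terms → 0 ⇒ eventually < ε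
  have hterm : Tendsto (fun n => φ (n + 1) / (φ n) ^ α) atTop (nhds 0) :=
    hsum.tendsto_atTop_zero
  obtain ⟨k, hk⟩ := eventually_atTop.mp (hterm.eventually (gt_mem_nhds hεpos))
  -- the key recursive bound: φ(n+1) ≤ r^α * φ n ^ α / r
  set ψ : ℕ → ℝ := fun n => r * φ n with hψdef
  have hψpos : ∀ n, 0 < ψ n := fun n => mul_pos hrpos (hφpos n)
  have hstep : ∀ n, k ≤ n → ψ (n + 1) ≤ (ψ n) ^ α := by
    intro n hn
    have h1 : φ (n + 1) / (φ n) ^ α < ε := hk n hn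
    have hφα : 0 < (φ n) ^ α := Real.rpow_pos_of_pos (hφpos n) _
    have h2 : φ (n + 1) ≤ ε * (φ n) ^ α := by
      rw [div_lt_iff₀ hφα] at h1
      linarith
    have h3 : ψ (n + 1) ≤ r * (ε * (φ n) ^ α) := by
      exact mul_le_mul_of_nonneg_left h2 hrpos.le
    have h4 : r * ε = r ^ α := by
      have h := (Real.rpow_add hrpos 1 (α - 1)).symm
      rw [Real.rpow_one] at h
      rw [hεdef, h]
      congr 1
      ring
    calc ψ (n + 1) ≤ r * (ε * (φ n) ^ α) := h3
      _ = (r * ε) * (φ n) ^ α := by ring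
      _ = r ^ α * (φ n) ^ α := by rw [h4]
      _ = (r * φ n) ^ α := (Real.mul_rpow hrpos.le (hφpos n).le).symm
      _ = (ψ n) ^ α := rfl
  set σ : ℕ → ℝ := fun n => Real.log (ψ n) / α ^ n with hσdef
  have hσstep : ∀ n, k ≤ n → σ (n + 1) ≤ σ n := by
    intro n hn
    have hlog : Real.log (ψ (n + 1)) ≤ α * Real.log (ψ n) := by
      calc Real.log (ψ (n + 1)) ≤ Real.log ((ψ n) ^ α) :=
            Real.log_le_log (hψpos (n + 1)) (hstep n hn)
        _ = α * Real.log (ψ n) := Real.log_rpow (hψpos n) α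
    have hpow : (0:ℝ) < α ^ (n + 1) := pow_pos hα0 _
    have : Real.log (ψ (n + 1)) / α ^ (n + 1) ≤ (α * Real.log (ψ n)) / α ^ (n + 1) :=
      div_le_div_of_nonneg_right hlog hpow.le |>.trans_eq rfl
    calc σ (n + 1) ≤ (α * Real.log (ψ n)) / α ^ (n + 1) := this
      _ = Real.log (ψ n) / α ^ n := by
          rw [pow_succ]
          field_simp
  have hσle : ∀ n, k ≤ n → σ n ≤ σ k := by
    intro n hn
    induction n, hn using Nat.le_induction with
    | base => exact le_refl _
    | succ n hn ih => exact le_trans (hσstep n hn) ih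
  have hσkneg : σ k < 0 := by
    have hψk1 : ψ k < 1 := lt_of_le_of_lt
      (mul_le_mul_of_nonneg_left (hc' k) hrpos.le) hrc
    exact div_neg_of_neg_of_pos (Real.log_neg (hψpos k) hψk1) (pow_pos hα0 _)
  -- σ tends to 0
  have hinv : Tendsto (fun n => (α ^ n)⁻¹) atTop (nhds 0) :=
    (tendsto_pow_atTop_atTop_of_one_lt hα).inv_tendsto_atTop
  have hσlim : Tendsto σ atTop (nhds 0) := by
    have heq : ∀ n, σ n = Real.log r * (α ^ n)⁻¹ + (Real.log (τ n) / α ^ n - θ) := by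
      intro n
      have hαn : α ^ n ≠ 0 := (pow_pos hα0 n).ne'
      have : Real.log (ψ n) = Real.log r + (Real.log (τ n) + (-θ * α ^ n)) := by
        rw [hψdef]
        simp only
        rw [Real.log_mul hrpos.ne' (hφpos n).ne', hφdef]
        simp only
        rw [Real.log_mul (hτ n).ne' (Real.exp_pos _).ne', Real.log_exp]
      rw [hσdef]
      simp only
      rw [this]
      field_simp
      ring
    have : Tendsto (fun n => Real.log r * (α ^ n)⁻¹ + (Real.log (τ n) / α ^ n - θ))
        atTop (nhds (Real.log r * 0 + (θ - θ))) :=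
      ((hinv.const_mul _)).add (hlim.sub_const θ)
    have h0 : Real.log r * 0 + (θ - θ) = 0 := by ring
    rw [h0] at this
    exact this.congr (fun n => (heq n).symm)
  have : (0:ℝ) ≤ σ k :=
    le_of_tendsto hσlim (eventually_atTop.mpr ⟨k, hσle⟩)
  linarith
end

section
/- Let (σ_n) be a positive sequence bounded above by σ with σ_n ≥ 1, τ_n = τ₀ + ∑_{i≤n} σ_i, and for α > 1 define π_{m,k} = ∏_{j=m+1}^{k} (1 + (α-1)σ_j/τ_j). Then there exist functions o(1) → 0 (as m → ∞, uniformly in k ≥ m) with m^{(α-1)/σ + o(1)} π_{m,k} ≥ k^{(α-1)/σ + o(1)} and m^{(α-1)σ + o(1)} π_{m,k} ≤ k^{(α-1)σ + o(1)}; in particular, c₁(ε) (k/m)^{(α-1)/σ - ε} ≤ π_{m,k} ≤ c₂(ε) (k/m)^{(α-1)σ + ε} for every ε > 0 and all m large. -/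
open Real Finset

-- 1/(n+1) ≤ log(n+1) - log n, for n ≥ 1
lemma auxA (n : ℕ) (hn : 1 ≤ n) : 1 / ((n : ℝ) + 1) ≤ Real.log ((n : ℝ) + 1) - Real.log n := by
  have hn' : (1:ℝ) ≤ n := by exact_mod_cast hn
  have hpos : (0:ℝ) < ((n:ℝ)+1)/n := by positivity
  have h := Real.one_sub_inv_le_log_of_pos hpos
  rw [Real.log_div (by positivity) (by positivity)] at h
  have : (((n:ℝ)+1)/n)⁻¹ = n/((n:ℝ)+1) := by field_simp
  rw [this] at h
  have : 1 - (n:ℝ)/((n:ℝ)+1) = 1/((n:ℝ)+1) := by field_simp; ring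
  linarith [this ▸ h]

-- log(n+1) - log n ≤ 1/n, for n ≥ 1
lemma auxB (n : ℕ) (hn : 1 ≤ n) : Real.log ((n : ℝ) + 1) - Real.log n ≤ 1 / (n : ℝ) := by
  have hn' : (1:ℝ) ≤ n := by exact_mod_cast hn
  have hpos : (0:ℝ) < ((n:ℝ)+1)/n := by positivity
  have h := Real.log_le_sub_one_of_pos hpos
  rw [Real.log_div (by positivity) (by positivity)] at h
  have : ((n:ℝ)+1)/n - 1 = 1/(n:ℝ) := by field_simp; ring
  linarith

lemma sumS1 (m : ℕ) (hm : 1 ≤ m) : ∀ k, m ≤ k →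
    ∑ j ∈ Icc (m+1) k, 1/(j:ℝ) ≤ Real.log k - Real.log m := by
  refine Nat.le_induction ?_ ?_
  · simp
  · intro k hk ih
    rw [Finset.sum_Icc_succ_top (by omega)]
    have hB := auxA k (le_trans hm hk)
    push_cast
    push_cast at ih hB
    linarith

lemma sumS2 (m : ℕ) (hm : 1 ≤ m) : ∀ k, m ≤ k →
    Real.log ((k:ℝ)+1) - Real.log ((m:ℝ)+1) ≤ ∑ j ∈ Icc (m+1) k, 1/(j:ℝ) := by
  refine Nat.le_induction ?_ ?_
  · simp
  · intro k hk ih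
    rw [Finset.sum_Icc_succ_top (by omega)]
    have hA := auxB (k+1) (by omega)
    push_cast
    push_cast at ih hA
    linarith

lemma sumS3 (m : ℕ) (hm : 1 ≤ m) : ∀ k, m ≤ k →
    ∑ j ∈ Icc (m+1) k, 1/((j:ℝ))^2 ≤ 1/(m:ℝ) - 1/(k:ℝ) := by
  refine Nat.le_induction ?_ ?_
  · simp
  · intro k hk ih
    rw [Finset.sum_Icc_succ_top (by omega)]
    have hk1 : (1:ℝ) ≤ k := by exact_mod_cast le_trans hm hk
    have key : 1/((k:ℝ)+1)^2 ≤ 1/(k:ℝ) - 1/((k:ℝ)+1) := by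
      rw [div_sub_div _ _ (by positivity) (by positivity)]
      rw [div_le_div_iff₀ (by positivity) (by positivity)]
      ring_nf
      nlinarith
    push_cast
    push_cast at ih
    linarith

set_option maxHeartbeats 1000000 in
/-- for bounded bin sizes 1 ≤ σ_j ≤ σ, the products
π_{m,k} = ∏_{j=m+1}^k (1 + (α-1)σ_j/τ_j) satisfy polynomial bounds
c₁ (k/m)^{(α-1)/σ - ε} ≤ π_{m,k} ≤ c₂ (k/m)^{(α-1)σ + ε} for large m. -/
theorem stmt10 (α σ τ0 : ℝ) (hα : 1 < α) (hτ0 : 1 ≤ τ0)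
    (σf : ℕ → ℝ) (hσ1 : ∀ n, 1 ≤ σf n) (hσ2 : ∀ n, σf n ≤ σ) :
    ∀ ε > (0 : ℝ), ∃ c₁ > (0 : ℝ), ∃ c₂ > (0 : ℝ), ∃ M : ℕ, ∀ m ≥ M, ∀ k ≥ m,
      c₁ * ((k : ℝ) / (m : ℝ)) ^ ((α - 1) / σ - ε) ≤
        (∏ j ∈ Finset.Icc (m + 1) k,
          (1 + (α - 1) * σf j / (τ0 + ∑ i ∈ Finset.Icc 1 j, σf i))) ∧
      (∏ j ∈ Finset.Icc (m + 1) k,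
          (1 + (α - 1) * σf j / (τ0 + ∑ i ∈ Finset.Icc 1 j, σf i))) ≤
        c₂ * ((k : ℝ) / (m : ℝ)) ^ ((α - 1) * σ + ε) := by
  intro ε hε
  have hσ : (1:ℝ) ≤ σ := le_trans (hσ1 0) (hσ2 0)
  have hσ0 : (0:ℝ) < σ := by linarith
  have hα' : (0:ℝ) < α - 1 := by linarith
  set τ : ℕ → ℝ := fun j => τ0 + ∑ i ∈ Finset.Icc 1 j, σf i with hτdef
  have hτ_lb : ∀ j : ℕ, (j:ℝ) + 1 ≤ τ j := by
    intro j
    have h1 : (j:ℝ) ≤ ∑ i ∈ Finset.Icc 1 j, σf i := by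
      calc (j:ℝ) = ∑ i ∈ Finset.Icc 1 j, (1:ℝ) := by simp [Nat.card_Icc]
        _ ≤ _ := Finset.sum_le_sum fun i _ => hσ1 i
    simp only [hτdef]; linarith
  have hτ_ub : ∀ j : ℕ, τ j ≤ τ0 + σ * j := by
    intro j
    have h1 : ∑ i ∈ Finset.Icc 1 j, σf i ≤ σ * j := by
      calc ∑ i ∈ Finset.Icc 1 j, σf i ≤ ∑ i ∈ Finset.Icc 1 j, σ :=
            Finset.sum_le_sum fun i _ => hσ2 i
        _ = σ * j := by simp [Nat.card_Icc, mul_comm]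
    simp only [hτdef]; linarith
  have hτ_pos : ∀ j, 0 < τ j := fun j => lt_of_lt_of_le (by positivity) (hτ_lb j)
  set a : ℕ → ℝ := fun j => (α - 1) * σf j / τ j with hadef
  have ha_pos : ∀ j, 0 < a j := by
    intro j
    have := hσ1 j
    have := hτ_pos j
    simp only [hadef]
    positivity
  have ha_ub : ∀ j : ℕ, 1 ≤ j → a j ≤ (α - 1) * σ / j := by
    intro j hj
    have hj' : (1:ℝ) ≤ j := by exact_mod_cast hj
    have h1 : (α - 1) * σf j ≤ (α - 1) * σ := by
      have := hσ2 j; nlinarith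
    have h2 : (j:ℝ) ≤ τ j := by linarith [hτ_lb j]
    simp only [hadef]
    exact div_le_div₀ (by positivity) h1 (by linarith) h2
  have ha_lb : ∀ j : ℕ, 1 ≤ j → (α - 1) / (τ0 + σ * j) ≤ a j := by
    intro j hj
    have hj' : (1:ℝ) ≤ j := by exact_mod_cast hj
    have h1 : (α - 1) ≤ (α - 1) * σf j := by
      have := hσ1 j; nlinarith
    simp only [hadef]
    exact div_le_div₀ (by nlinarith [hσ1 j]) h1 (hτ_pos j) (hτ_ub j)
  -- per-term log bounds
  set D : ℝ := (α - 1) * τ0 / σ + ((α - 1) * σ)^2 with hDdef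
  have hD : 0 < D := by positivity
  have hlog_ub : ∀ j : ℕ, 1 ≤ j →
      Real.log (1 + a j) ≤ (α - 1) * σ * (1 / j) := by
    intro j hj
    have h1 : Real.log (1 + a j) ≤ a j := by
      have := Real.log_le_sub_one_of_pos (x := 1 + a j) (by linarith [ha_pos j])
      linarith
    calc Real.log (1 + a j) ≤ a j := h1
      _ ≤ (α - 1) * σ / j := ha_ub j hj
      _ = (α - 1) * σ * (1 / j) := by ring
  have hlog_lb : ∀ j : ℕ, 1 ≤ j →
      (α - 1) / σ * (1 / j) - D / (j:ℝ)^2 ≤ Real.log (1 + a j) := by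
    intro j hj
    have hj' : (1:ℝ) ≤ j := by exact_mod_cast hj
    have hjpos : (0:ℝ) < j := by linarith
    have haj := ha_pos j
    -- log(1+a) ≥ a/(1+a) ≥ a - a²
    have h1 : a j / (1 + a j) ≤ Real.log (1 + a j) := by
      have := Real.one_sub_inv_le_log_of_pos (x := 1 + a j) (by linarith)
      have heq : 1 - (1 + a j)⁻¹ = a j / (1 + a j) := by
        field_simp; ring
      linarith [heq ▸ this]
    have h2 : a j - (a j)^2 ≤ a j / (1 + a j) := by
      rw [le_div_iff₀ (by linarith)]
      nlinarith [sq_nonneg (a j)]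
    -- a j ≥ (α-1)/σ (1/j) - (α-1)τ0/σ / j²
    have h3 : (α - 1) / σ * (1 / j) - ((α - 1) * τ0 / σ) / (j:ℝ)^2 ≤ (α - 1) / (τ0 + σ * j) := by
      have e1 : (α - 1) / σ * (1 / (j:ℝ)) - ((α - 1) * τ0 / σ) / (j:ℝ)^2
          = (α - 1) * ((j:ℝ) - τ0) / (σ * (j:ℝ)^2) := by
        field_simp
      rw [e1, div_le_div_iff₀ (by positivity) (by positivity)]
      have hkey : (0:ℝ) ≤ (α - 1) * τ0 * (σ * (j:ℝ) - (j:ℝ) + τ0) := by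
        have h : (0:ℝ) ≤ σ * (j:ℝ) - (j:ℝ) + τ0 := by nlinarith
        exact mul_nonneg (mul_nonneg hα'.le (by linarith)) h
      nlinarith [hkey]
    -- (a j)² ≤ ((α-1)σ)²/j²
    have h4 : (a j)^2 ≤ ((α - 1) * σ)^2 / (j:ℝ)^2 := by
      have hub := ha_ub j hj
      have : (a j)^2 ≤ ((α - 1) * σ / j)^2 := by
        nlinarith [ha_pos j]
      calc (a j)^2 ≤ ((α - 1) * σ / j)^2 := this
        _ = ((α - 1) * σ)^2 / (j:ℝ)^2 := by rw [div_pow]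
    have h5 := ha_lb j hj
    have : (α - 1) / σ * (1 / j) - D / (j:ℝ)^2 ≤ a j - (a j)^2 := by
      rw [hDdef]
      have hsplit : ((α - 1) * τ0 / σ + ((α - 1) * σ)^2) / (j:ℝ)^2
          = ((α - 1) * τ0 / σ) / (j:ℝ)^2 + ((α - 1) * σ)^2 / (j:ℝ)^2 := by
        rw [add_div]
      rw [hsplit]
      linarith
    linarith
  -- choose constants
  set β : ℝ := (α - 1) / σ with hβdef
  have hβ : 0 < β := by positivity
  set C : ℝ := β * Real.log 2 + D with hCdef
  have hC : 0 < C := by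
    have : 0 < Real.log 2 := Real.log_pos (by norm_num)
    positivity
  refine ⟨Real.exp (-C), Real.exp_pos _, 1, one_pos, 1, ?_⟩
  intro m hm k hk
  have hm1 : (1:ℝ) ≤ m := by exact_mod_cast hm
  have hk1 : (1:ℝ) ≤ k := by exact_mod_cast le_trans hm hk
  have hmk : (m:ℝ) ≤ k := by exact_mod_cast hk
  have hmem : ∀ j ∈ Finset.Icc (m+1) k, 1 ≤ j := by
    intro j hj
    rw [Finset.mem_Icc] at hj
    omega
  set P : ℝ := ∏ j ∈ Finset.Icc (m + 1) k, (1 + a j) with hPdef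
  have hPpos : 0 < P := Finset.prod_pos fun j _ => by linarith [ha_pos j]
  have hlogP : Real.log P = ∑ j ∈ Finset.Icc (m+1) k, Real.log (1 + a j) :=
    Real.log_prod fun j _ => ne_of_gt (by linarith [ha_pos j])
  have hL0 : 0 ≤ Real.log k - Real.log m := by
    have := Real.log_le_log (by linarith : (0:ℝ) < m) hmk
    linarith
  -- upper bound on log P
  have hU : Real.log P ≤ (α - 1) * σ * (Real.log k - Real.log m) := by
    rw [hlogP]
    calc ∑ j ∈ Finset.Icc (m+1) k, Real.log (1 + a j)
        ≤ ∑ j ∈ Finset.Icc (m+1) k, (α - 1) * σ * (1 / j) :=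
          Finset.sum_le_sum fun j hj => hlog_ub j (hmem j hj)
      _ = (α - 1) * σ * ∑ j ∈ Finset.Icc (m+1) k, (1 / (j:ℝ)) := by
          rw [Finset.mul_sum]
      _ ≤ (α - 1) * σ * (Real.log k - Real.log m) :=
          mul_le_mul_of_nonneg_left (sumS1 m hm k hk) (by positivity)
  -- lower bound on log P
  have hsum2 : Real.log k - Real.log m - Real.log 2 ≤ ∑ j ∈ Finset.Icc (m+1) k, (1/(j:ℝ)) := by
    have h := sumS2 m hm k hk
    have h2 : Real.log ((m:ℝ)+1) ≤ Real.log m + Real.log 2 := by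
      rw [← Real.log_mul (by linarith) (by norm_num)]
      exact Real.log_le_log (by linarith) (by linarith)
    have h3 : Real.log k ≤ Real.log ((k:ℝ)+1) :=
      Real.log_le_log (by linarith) (by linarith)
    linarith
  have hsum3 : ∑ j ∈ Finset.Icc (m+1) k, 1/((j:ℝ))^2 ≤ 1 := by
    have h := sumS3 m hm k hk
    have : 1/(m:ℝ) ≤ 1 := by
      rw [div_le_one (by linarith)]; exact hm1
    have : 0 ≤ 1/(k:ℝ) := by positivity
    linarith
  have hLo : β * (Real.log k - Real.log m) - C ≤ Real.log P := by
    rw [hlogP]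
    have step : ∑ j ∈ Finset.Icc (m+1) k, (β * (1/(j:ℝ)) - D/(j:ℝ)^2)
        ≤ ∑ j ∈ Finset.Icc (m+1) k, Real.log (1 + a j) :=
      Finset.sum_le_sum fun j hj => hlog_lb j (hmem j hj)
    have split : ∑ j ∈ Finset.Icc (m+1) k, (β * (1/(j:ℝ)) - D/(j:ℝ)^2)
        = β * (∑ j ∈ Finset.Icc (m+1) k, (1/(j:ℝ))) - D * ∑ j ∈ Finset.Icc (m+1) k, (1/(j:ℝ)^2) := by
      rw [Finset.sum_sub_distrib, Finset.mul_sum, Finset.mul_sum]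
      congr 1
      exact Finset.sum_congr rfl fun j _ => by ring
    have h1 : β * (Real.log k - Real.log m - Real.log 2) ≤ β * ∑ j ∈ Finset.Icc (m+1) k, (1/(j:ℝ)) :=
      mul_le_mul_of_nonneg_left hsum2 (le_of_lt hβ)
    have h2 : D * ∑ j ∈ Finset.Icc (m+1) k, (1/(j:ℝ)^2) ≤ D * 1 :=
      mul_le_mul_of_nonneg_left hsum3 (le_of_lt hD)
    rw [split] at step
    have expand : β * (Real.log k - Real.log m) - C
        = β * (Real.log k - Real.log m - Real.log 2) - D * 1 := by rw [hCdef]; ring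
    rw [expand]
    exact le_trans (sub_le_sub h1 h2) step
  -- convert to rpow
  have hdivpos : (0:ℝ) < (k:ℝ)/(m:ℝ) := by positivity
  have hdiv1 : (1:ℝ) ≤ (k:ℝ)/(m:ℝ) := by
    rw [le_div_iff₀ (by linarith)]; linarith
  have hlogdiv : Real.log ((k:ℝ)/(m:ℝ)) = Real.log k - Real.log m :=
    Real.log_div (by linarith) (by linarith)
  have hrpow : ∀ y : ℝ, ((k:ℝ)/(m:ℝ)) ^ y = Real.exp ((Real.log k - Real.log m) * y) := by
    intro y
    rw [Real.rpow_def_of_pos hdivpos, hlogdiv]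
  constructor
  · -- lower bound
    calc Real.exp (-C) * ((k:ℝ)/(m:ℝ)) ^ ((α - 1)/σ - ε)
        ≤ Real.exp (-C) * ((k:ℝ)/(m:ℝ)) ^ β := by
          apply mul_le_mul_of_nonneg_left ?_ (le_of_lt (Real.exp_pos _))
          exact Real.rpow_le_rpow_of_exponent_le hdiv1 (by rw [hβdef]; linarith)
      _ = Real.exp (β * (Real.log k - Real.log m) - C) := by
          rw [hrpow β, ← Real.exp_add]; ring_nf
      _ ≤ Real.exp (Real.log P) := Real.exp_le_exp.mpr hLo
      _ = P := Real.exp_log hPpos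
  · -- upper bound
    calc P = Real.exp (Real.log P) := (Real.exp_log hPpos).symm
      _ ≤ Real.exp ((α - 1) * σ * (Real.log k - Real.log m)) := Real.exp_le_exp.mpr hU
      _ = ((k:ℝ)/(m:ℝ)) ^ ((α - 1) * σ) := by rw [hrpow]; ring_nf
      _ ≤ ((k:ℝ)/(m:ℝ)) ^ ((α - 1) * σ + ε) :=
          Real.rpow_le_rpow_of_exponent_le hdiv1 (by linarith)
      _ = 1 * ((k:ℝ)/(m:ℝ)) ^ ((α - 1) * σ + ε) := by ring
end

section
/- Let (M_n) be a martingale with M_0 = 0 adapted to a filtration (F_n), with conditionally independent increments of the form M_n - M_{n-1} = B_n - σ_n P_{n-1}, where conditionally on F_{n-1}, B_n is Binomial(σ_n, P_{n-1}) and P_{n-1} is F_{n-1}-measurable with values in [0,1], σ_n ≥ 1 integers. If Y_n = ∑_{i=1}^n σ_i P_{i-1} → ∞ almost surely, then T_n = T_0 + ∑_{i=1}^n B_i → ∞ almost surely. -/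
open MeasureTheory Filter

lemma aux_min_tendsto (x : ℕ → ℝ) (hx : ∀ n, 0 ≤ x n)
    (h : Tendsto (fun n => ∑ i ∈ Finset.range n, x i) atTop atTop) :
    Tendsto (fun n => ∑ i ∈ Finset.range n, min 1 (x i)) atTop atTop := by
  by_contra hc
  have hmin_nonneg : ∀ i, 0 ≤ min 1 (x i) := fun i => le_min zero_le_one (hx i)
  have hsum : Summable fun i => min 1 (x i) :=
    (summable_iff_not_tendsto_nat_atTop_of_nonneg hmin_nonneg).2 hc
  have hto0 := hsum.tendsto_atTop_zero
  obtain ⟨N, hN⟩ := (hto0.eventually (gt_mem_nhds (by norm_num : (0:ℝ) < 1))).exists_forall_of_atTop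
  have heq : ∀ i, N ≤ i → min 1 (x i) = x i := by
    intro i hi
    have := hN i hi
    rcases le_total (x i) 1 with h1 | h1
    · exact min_eq_right h1
    · exfalso; rw [min_eq_left h1] at this; exact absurd this (lt_irrefl 1).elim
  have hsumx : Summable x := by
    have h1 : Summable fun i => min 1 (x (i + N)) := (summable_nat_add_iff N).2 hsum
    have h2 : Summable fun i => x (i + N) :=
      h1.congr fun i => heq (i + N) (Nat.le_add_left N i)
    exact (summable_nat_add_iff N).1 h2
  exact (summable_iff_not_tendsto_nat_atTop_of_nonneg hx).1 hsumx h

lemma aux_pow_bound (p : ℝ) (hp0 : 0 ≤ p) (hp1 : p ≤ 1) (σ : ℕ) (hσ : 1 ≤ σ) :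
    min 1 ((σ : ℝ) * p) / 2 ≤ 1 - (1 - p) ^ σ := by
  set q : ℝ := (σ : ℝ) * p with hq
  have hq0 : 0 ≤ q := mul_nonneg (Nat.cast_nonneg σ) hp0
  have hr0 : 0 ≤ (1 - p) ^ σ := pow_nonneg (by linarith) σ
  have hbern : 1 + q ≤ (1 + p) ^ σ := by
    simpa [hq, mul_comm] using one_add_mul_le_pow (by linarith : (-2:ℝ) ≤ p) σ
  have hkey : (1 - p) ^ σ * (1 + q) ≤ 1 := by
    have h1 : (1 - p) ^ σ * (1 + q) ≤ (1 - p) ^ σ * (1 + p) ^ σ :=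
      mul_le_mul_of_nonneg_left hbern hr0
    have h2 : (1 - p) ^ σ * (1 + p) ^ σ = (1 - p ^ 2) ^ σ := by
      rw [← mul_pow]; ring_nf
    have h3 : (1 - p ^ 2) ^ σ ≤ 1 := pow_le_one₀ (by nlinarith) (by nlinarith)
    calc (1 - p) ^ σ * (1 + q) ≤ (1 - p ^ 2) ^ σ := h2 ▸ h1
      _ ≤ 1 := h3
  rcases le_total q 1 with h1 | h1
  · rw [min_eq_right h1]; nlinarith
  · rw [min_eq_left h1]; nlinarith

/-- if, conditionally on F_n, B_{n+1} ~ Binomial(σ_{n+1}, P_n) with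
P adapted and [0,1]-valued, and Y_n = ∑_{i≤n} σ_i P_{i-1} → ∞ a.s., then
T_n = T_0 + ∑_{i≤n} B_i → ∞ a.s. -/
theorem stmt11 {Ω : Type*} {m0 : MeasurableSpace Ω} {μ : Measure Ω}
    [IsProbabilityMeasure μ] (ℱ : Filtration ℕ m0)
    (σn : ℕ → ℕ) (hσ : ∀ n, 1 ≤ σn n)
    (P : ℕ → Ω → ℝ) (B : ℕ → Ω → ℕ)
    (hPadapted : ∀ n, StronglyMeasurable[ℱ n] (P n))
    (hP01 : ∀ n ω, P n ω ∈ Set.Icc (0 : ℝ) 1)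
    (hBmeas : ∀ n, StronglyMeasurable[ℱ n] (B n))
    (hBle : ∀ n ω, B (n + 1) ω ≤ σn (n + 1))
    (hbinom : ∀ n, ∀ k ≤ σn (n + 1),
      μ[Set.indicator {ω | B (n + 1) ω = k} (fun _ => (1 : ℝ)) | ℱ n] =ᵐ[μ]
        fun ω => ((σn (n + 1)).choose k : ℝ) * (P n ω) ^ k *
          (1 - P n ω) ^ (σn (n + 1) - k))
    (T0 : ℝ)
    (hY : ∀ᵐ ω ∂μ, Tendsto (fun n => ∑ i ∈ Finset.range n, (σn (i + 1) : ℝ) * P i ω)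
      atTop atTop) :
    ∀ᵐ ω ∂μ, Tendsto (fun n => T0 + ∑ i ∈ Finset.range n, (B (i + 1) ω : ℝ))
      atTop atTop := by
  classical
  set s : ℕ → Set Ω := fun n => {ω | B n ω ≠ 0} with hs_def
  have hsmeas : ∀ n, MeasurableSet[ℱ n] (s n) := fun n =>
    ((hBmeas n).measurable (measurableSet_singleton 0)).compl
  -- conditional expectation computation
  have hce : ∀ k, μ[(s (k + 1)).indicator (1 : Ω → ℝ) | ℱ k] =ᵐ[μ]
      fun ω => 1 - (1 - P k ω) ^ σn (k + 1) := by
    intro k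
    have hzero : MeasurableSet {ω | B (k + 1) ω = 0} :=
      ℱ.le (k + 1) _ ((hBmeas (k + 1)).measurable (measurableSet_singleton 0))
    have hsplit : (s (k + 1)).indicator (1 : Ω → ℝ) =
        (fun _ => (1 : ℝ)) - Set.indicator {ω | B (k + 1) ω = 0} (fun _ => (1 : ℝ)) := by
      funext ω
      by_cases h : B (k + 1) ω = 0 <;>
        simp [hs_def, Set.indicator_apply, h]
    have hint1 : Integrable (fun _ : Ω => (1 : ℝ)) μ := integrable_const 1
    have hint2 : Integrable (Set.indicator {ω | B (k + 1) ω = 0} (fun _ => (1 : ℝ))) μ :=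
      hint1.indicator hzero
    have h1 := condExp_sub (m := ℱ k) (μ := μ) hint1 hint2
    have h2 := hbinom k 0 (Nat.zero_le _)
    rw [hsplit]
    refine h1.trans ?_
    have h3 : μ[fun _ : Ω => (1 : ℝ) | ℱ k] = fun _ => (1 : ℝ) := condExp_const (ℱ.le k) 1
    filter_upwards [h2] with ω hω
    simp only [Pi.sub_apply, h3, hω, Nat.choose_zero_right, pow_zero, Nat.sub_zero,
      Nat.cast_one, one_mul, mul_one]
  have hBC := tendsto_sum_indicator_atTop_iff' (μ := μ) hsmeas
  filter_upwards [hBC, hY, ae_all_iff.2 fun k => hce k] with ω hBCω hYω hceω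
  -- predictable part tends to infinity
  have hpred : Tendsto (fun n => ∑ k ∈ Finset.range n,
      (μ[(s (k + 1)).indicator (1 : Ω → ℝ) | ℱ k]) ω) atTop atTop := by
    have hmin : Tendsto (fun n => ∑ k ∈ Finset.range n,
        min 1 ((σn (k + 1) : ℝ) * P k ω)) atTop atTop :=
      aux_min_tendsto _ (fun k => mul_nonneg (Nat.cast_nonneg _) (hP01 k ω).1) hYω
    have hmin2 : Tendsto (fun n => (∑ k ∈ Finset.range n,
        min 1 ((σn (k + 1) : ℝ) * P k ω)) / 2) atTop atTop :=
      hmin.atTop_div_const two_pos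
    refine tendsto_atTop_mono (fun n => ?_) hmin2
    rw [Finset.sum_div]
    refine Finset.sum_le_sum fun k _ => ?_
    rw [hceω k]
    exact aux_pow_bound (P k ω) (hP01 k ω).1 (hP01 k ω).2 _ (hσ (k + 1))
  have hind : Tendsto (fun n => ∑ k ∈ Finset.range n,
      (s (k + 1)).indicator (1 : Ω → ℝ) ω) atTop atTop := hBCω.2 hpred
  have hfinal : Tendsto (fun n => ∑ i ∈ Finset.range n, (B (i + 1) ω : ℝ)) atTop atTop := by
    refine tendsto_atTop_mono (fun n => Finset.sum_le_sum fun k _ => ?_) hind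
    by_cases h : B (k + 1) ω = 0
    · simp [hs_def, Set.indicator_apply, h]
    · rw [Set.indicator_of_mem (by exact h : ω ∈ s (k + 1)), Pi.one_apply]
      exact_mod_cast Nat.one_le_iff_ne_zero.2 h
  exact tendsto_atTop_add_const_left _ T0 hfinal
end

section
/- In the balls-and-bins model with feedback exponent α > 1: if ∑_{n≥0} σ_{n+1}/τ_n^α = ∞, then almost surely both bins receive infinitely many balls, i.e., the probability of monopoly is zero. -/
open MeasureTheory Filter

lemma aux_min_le (p : ℝ) (n : ℕ) (hp0 : 0 ≤ p) (hp1 : p ≤ 1) :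
    min 1 ((n : ℝ) * p) / 2 ≤ 1 - (1 - p) ^ n := by
  have hnp : 0 ≤ (n : ℝ) * p := mul_nonneg (Nat.cast_nonneg n) hp0
  have h1 : 1 + (n : ℝ) * p ≤ (1 + p) ^ n := by
    simpa using one_add_mul_le_pow (by linarith : (-2 : ℝ) ≤ p) n
  have h2 : (1 - p) ^ n * (1 + p) ^ n ≤ 1 := by
    rw [← mul_pow]
    have : (1 - p) * (1 + p) ≤ 1 := by nlinarith
    calc ((1 - p) * (1 + p)) ^ n ≤ 1 ^ n := by
          apply pow_le_pow_left₀ (by nlinarith) this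
      _ = 1 := one_pow n
  have hx0 : (0 : ℝ) ≤ (1 - p) ^ n := pow_nonneg (by linarith) n
  have h3 : (1 - p) ^ n * (1 + (n : ℝ) * p) ≤ 1 :=
    le_trans (mul_le_mul_of_nonneg_left h1 hx0) h2
  rcases le_total ((n : ℝ) * p) 1 with h | h
  · rw [min_eq_right h]
    nlinarith
  · rw [min_eq_left h]
    nlinarith

lemma aux_not_summable {a : ℕ → ℝ} (h : ¬ Summable a) :
    ¬ Summable (fun n => min 1 (a n) / 2) := by
  intro hs
  apply h
  have hs2 : Summable (fun n => min 1 (a n)) := by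
    have := hs.mul_right 2
    simpa using this
  have h0 : Tendsto (fun n => min 1 (a n)) atTop (nhds 0) := hs2.tendsto_atTop_zero
  have hev : ∀ᶠ n in atTop, min 1 (a n) = a n := by
    filter_upwards [h0.eventually (gt_mem_nhds (by norm_num : (0:ℝ) < 1))] with n hn
    rcases le_total (a n) 1 with h' | h'
    · exact min_eq_right h'
    · exact absurd (min_eq_left h' ▸ hn) (by norm_num)
  obtain ⟨N, hN⟩ := eventually_atTop.mp hev
  have : Summable (fun n => a (n + N)) := by
    refine ((summable_nat_add_iff N).mpr hs2).congr fun n => hN (n + N) (by omega)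
  exact (summable_nat_add_iff N).mp this

lemma aux_p (α t τ : ℝ) (hα : 1 ≤ α) (ht : 1 ≤ t) (htτ : t + 1 ≤ τ) :
    1/τ^α ≤ (t/τ)^α / ((t/τ)^α + (1 - t/τ)^α) ∧
    1/τ^α ≤ 1 - (t/τ)^α / ((t/τ)^α + (1 - t/τ)^α) ∧
    0 ≤ (t/τ)^α / ((t/τ)^α + (1 - t/τ)^α) ∧
    (t/τ)^α / ((t/τ)^α + (1 - t/τ)^α) ≤ 1 := by
  have hτ : 0 < τ := by linarith
  set θ := t / τ with hθ
  have hθpos : 0 < θ := div_pos (by linarith) hτ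
  have hθl : 1/τ ≤ θ := by rw [hθ]; gcongr
  have hθu : θ ≤ 1 - 1/τ := by
    rw [hθ, div_le_iff₀ hτ]
    have h : (1 - 1/τ) * τ = τ - 1 := by field_simp
    rw [h]; linarith
  have h1θl : 1/τ ≤ 1 - θ := by linarith
  have hθ1 : θ ≤ 1 := by
    have : (0:ℝ) < 1/τ := by positivity
    linarith
  have h1θpos : 0 < 1 - θ := lt_of_lt_of_le (by positivity) h1θl
  have ha : 0 < θ ^ α := Real.rpow_pos_of_pos hθpos α
  have hb : 0 < (1 - θ) ^ α := Real.rpow_pos_of_pos h1θpos α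
  have ha1 : θ ^ α ≤ θ := by
    simpa using Real.rpow_le_rpow_of_exponent_ge hθpos hθ1 hα
  have hb1 : (1 - θ) ^ α ≤ 1 - θ := by
    simpa using Real.rpow_le_rpow_of_exponent_ge h1θpos (by linarith) hα
  have hq1 : θ ^ α + (1 - θ) ^ α ≤ 1 := by linarith
  have hq0 : 0 < θ ^ α + (1 - θ) ^ α := by linarith
  have hτα : 1/τ^α ≤ θ ^ α := by
    calc 1/τ^α = (1/τ) ^ α := by
          rw [Real.div_rpow zero_le_one hτ.le, Real.one_rpow]
      _ ≤ θ ^ α := Real.rpow_le_rpow (by positivity) hθl (by linarith)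
  have hτβ : 1/τ^α ≤ (1 - θ) ^ α := by
    calc 1/τ^α = (1/τ) ^ α := by
          rw [Real.div_rpow zero_le_one hτ.le, Real.one_rpow]
      _ ≤ (1 - θ) ^ α := Real.rpow_le_rpow (by positivity) h1θl (by linarith)
  have hpa : θ ^ α ≤ θ ^ α / (θ ^ α + (1 - θ) ^ α) := by
    rw [le_div_iff₀ hq0]; nlinarith
  have h1p : 1 - θ ^ α / (θ ^ α + (1 - θ) ^ α) = (1 - θ) ^ α / (θ ^ α + (1 - θ) ^ α) := by
    field_simp
    ring
  refine ⟨hτα.trans hpa, ?_, by positivity, ?_⟩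
  · rw [h1p]
    refine hτβ.trans ?_
    rw [le_div_iff₀ hq0]; nlinarith
  · rw [div_le_one hq0]; linarith

/-- in the balls-and-bins model with feedback exponent α > 1, where
P_n = Θ_n^α/(Θ_n^α + (1-Θ_n)^α) with Θ_n = T_n/τ_n, if ∑ σ_{n+1}/τ_n^α = ∞ then
the probability of monopoly is zero. -/
theorem stmt12 {Ω : Type*} {m0 : MeasurableSpace Ω} {μ : Measure Ω}
    [IsProbabilityMeasure μ] (ℱ : Filtration ℕ m0)
    (α : ℝ) (hα : 1 < α)
    (σn τn : ℕ → ℕ) (hσ : ∀ n, 1 ≤ σn n)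
    (hτrec : ∀ n, τn (n + 1) = τn n + σn (n + 1))
    (T B : ℕ → Ω → ℕ) (T0 : ℕ) (hT0pos : 0 < T0) (hT0lt : T0 < τn 0)
    (hT0 : ∀ ω, T 0 ω = T0)
    (hTrec : ∀ n ω, T (n + 1) ω = T n ω + B (n + 1) ω)
    (hTmeas : ∀ n, StronglyMeasurable[ℱ n] (T n))
    (hBmeas : ∀ n, StronglyMeasurable[ℱ n] (B n))
    (hBle : ∀ n ω, B (n + 1) ω ≤ σn (n + 1))
    (hbinom : ∀ n, ∀ k ≤ σn (n + 1),
      μ[Set.indicator {ω | B (n + 1) ω = k} (fun _ => (1 : ℝ)) | ℱ n] =ᵐ[μ]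
        fun ω => ((σn (n + 1)).choose k : ℝ) *
          (((T n ω : ℝ) / (τn n : ℝ)) ^ α /
            (((T n ω : ℝ) / (τn n : ℝ)) ^ α + (1 - (T n ω : ℝ) / (τn n : ℝ)) ^ α)) ^ k *
          (1 - ((T n ω : ℝ) / (τn n : ℝ)) ^ α /
            (((T n ω : ℝ) / (τn n : ℝ)) ^ α + (1 - (T n ω : ℝ) / (τn n : ℝ)) ^ α))
            ^ (σn (n + 1) - k))
    (hdiv : ¬ Summable (fun n => (σn (n + 1) : ℝ) / ((τn n : ℝ)) ^ α)) :
    μ {ω | (∀ᶠ n in atTop, B (n + 1) ω = 0) ∨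
        (∀ᶠ n in atTop, B (n + 1) ω = σn (n + 1))} = 0 := by
  classical
  -- deterministic bounds
  have hT1 : ∀ k ω, 1 ≤ T k ω := by
    intro k
    induction k with
    | zero => intro ω; rw [hT0]; omega
    | succ n ih => intro ω; rw [hTrec]; have := ih ω; omega
  have hTub : ∀ k ω, T k ω + 1 ≤ τn k := by
    intro k
    induction k with
    | zero => intro ω; rw [hT0]; omega
    | succ n ih =>
      intro ω
      rw [hTrec, hτrec]
      have h1 := ih ω
      have h2 := hBle n ω
      omega
  -- the conditional probability P
  set P : ℕ → Ω → ℝ := fun k ω =>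
    ((T k ω : ℝ) / (τn k : ℝ)) ^ α /
      (((T k ω : ℝ) / (τn k : ℝ)) ^ α + (1 - (T k ω : ℝ) / (τn k : ℝ)) ^ α) with hP
  have hPb : ∀ k ω, 1/((τn k : ℝ))^α ≤ P k ω ∧ 1/((τn k : ℝ))^α ≤ 1 - P k ω ∧
      0 ≤ P k ω ∧ P k ω ≤ 1 := by
    intro k ω
    exact aux_p α (T k ω) (τn k) hα.le (by exact_mod_cast hT1 k ω)
      (by exact_mod_cast hTub k ω)
  -- the deterministic lower bound sequence
  set c : ℕ → ℝ := fun k => min 1 ((σn (k+1) : ℝ) / ((τn k : ℝ))^α) / 2 with hc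
  have hcnonneg : ∀ k, 0 ≤ c k := by
    intro k
    have : (0:ℝ) ≤ (σn (k+1) : ℝ) / ((τn k : ℝ))^α :=
      div_nonneg (Nat.cast_nonneg _) (Real.rpow_nonneg (Nat.cast_nonneg _) _)
    have h1 : (0:ℝ) ≤ min 1 ((σn (k+1) : ℝ) / ((τn k : ℝ))^α) := le_min zero_le_one this
    rw [hc]; positivity
  have hcdiv : ¬ Summable c := aux_not_summable hdiv
  -- generalized Borel-Cantelli
  have key : ∀ s : ℕ → Set Ω, (∀ n, MeasurableSet[ℱ n] (s n)) →
      (∀ k, ∀ᵐ ω ∂μ, c k ≤ (μ[(s (k + 1)).indicator (1 : Ω → ℝ)|ℱ k]) ω) →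
      ∀ᵐ ω ∂μ, ω ∈ limsup s atTop := by
    intro s hs hge
    rw [← ae_all_iff] at hge
    filter_upwards [ae_mem_limsup_atTop_iff μ hs, hge] with ω hω hgeω
    rw [hω]
    have htend : Tendsto (fun n => ∑ k ∈ Finset.range n, c k) atTop atTop :=
      (not_summable_iff_tendsto_nat_atTop_of_nonneg hcnonneg).mp hcdiv
    exact tendsto_atTop_mono (fun n => Finset.sum_le_sum fun k _ => hgeω k) htend
  -- measurability of level sets
  have hBset : ∀ n (j : ℕ), MeasurableSet[ℱ n] {ω | B n ω = j} := by
    intro n j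
    exact (hBmeas n).measurable (measurableSet_singleton j)
  have hint : ∀ n (j : ℕ), Integrable ({ω | B n ω = j}.indicator (fun _ => (1:ℝ))) μ :=
    fun n j => (integrable_const 1).indicator (ℱ.le n _ (hBset n j))
  -- conditional expectation of the complementary indicator
  have hce : ∀ (k : ℕ) (j : ℕ),
      μ[({ω | B (k+1) ω ≠ j}).indicator (1 : Ω → ℝ)|ℱ k] =ᵐ[μ]
        fun ω => 1 - (μ[({ω | B (k+1) ω = j}).indicator (fun _ => (1:ℝ))|ℱ k]) ω := by
    intro k j
    have heq : ({ω | B (k+1) ω ≠ j}).indicator (1 : Ω → ℝ) =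
        (fun _ => (1:ℝ)) - ({ω | B (k+1) ω = j}).indicator (fun _ => (1:ℝ)) := by
      funext ω
      by_cases h : B (k+1) ω = j <;> simp [Set.indicator, h]
    rw [heq]
    refine (condExp_sub (integrable_const 1) (hint (k+1) j) (ℱ k)).trans ?_
    rw [condExp_const (ℱ.le k)]
    exact Eventually.of_forall fun ω => rfl
  -- Case A : bin 1 receives a ball infinitely often
  have hA : ∀ᵐ ω ∂μ, ω ∈ limsup (fun n => {ω | B n ω ≠ 0}) atTop := by
    refine key _ (fun n => (hBset n 0).compl) ?_
    intro k
    have h0 := hbinom k 0 (Nat.zero_le _)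
    have h0' : (fun ω => ((σn (k + 1)).choose 0 : ℝ) * (P k ω) ^ (0:ℕ) *
        (1 - P k ω) ^ (σn (k + 1) - 0)) = fun ω => (1 - P k ω) ^ (σn (k+1)) := by
      funext ω; simp
    filter_upwards [hce k 0, h0] with ω h1 h2
    have hval : (μ[({ω | B (k+1) ω ≠ 0}).indicator (1 : Ω → ℝ)|ℱ k]) ω =
        1 - (1 - P k ω) ^ (σn (k+1)) := by
      rw [h1, h2]; simp [hP]
    rw [hval]
    obtain ⟨hl, hr, h0p, h1p⟩ := hPb k ω
    have hmin := aux_min_le (P k ω) (σn (k+1)) h0p h1p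
    have hmono : min 1 ((σn (k+1) : ℝ) / ((τn k : ℝ))^α) ≤
        min 1 ((σn (k+1) : ℝ) * P k ω) := by
      refine min_le_min le_rfl ?_
      rw [div_eq_mul_one_div]
      exact mul_le_mul_of_nonneg_left hl (Nat.cast_nonneg _)
    rw [hc]
    calc min 1 ((σn (k+1) : ℝ) / ((τn k : ℝ))^α) / 2
        ≤ min 1 ((σn (k+1) : ℝ) * P k ω) / 2 := by linarith
      _ ≤ 1 - (1 - P k ω) ^ (σn (k+1)) := hmin
  -- Case B : bin 2 receives a ball infinitely often
  have hB : ∀ᵐ ω ∂μ, ω ∈ limsup (fun n => {ω | B n ω ≠ σn n}) atTop := by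
    refine key _ (fun n => (hBset n (σn n)).compl) ?_
    intro k
    have h0 := hbinom k (σn (k+1)) le_rfl
    filter_upwards [hce k (σn (k+1)), h0] with ω h1 h2
    have hval : (μ[({ω | B (k+1) ω ≠ σn (k+1)}).indicator (1 : Ω → ℝ)|ℱ k]) ω =
        1 - (P k ω) ^ (σn (k+1)) := by
      rw [h1, h2]; simp [hP]
    rw [hval]
    obtain ⟨hl, hr, h0p, h1p⟩ := hPb k ω
    have hmin := aux_min_le (1 - P k ω) (σn (k+1)) (by linarith) (by linarith)
    rw [sub_sub_cancel] at hmin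
    have hmono : min 1 ((σn (k+1) : ℝ) / ((τn k : ℝ))^α) ≤
        min 1 ((σn (k+1) : ℝ) * (1 - P k ω)) := by
      refine min_le_min le_rfl ?_
      rw [div_eq_mul_one_div]
      exact mul_le_mul_of_nonneg_left hr (Nat.cast_nonneg _)
    rw [hc]
    calc min 1 ((σn (k+1) : ℝ) / ((τn k : ℝ))^α) / 2
        ≤ min 1 ((σn (k+1) : ℝ) * (1 - P k ω)) / 2 := by linarith
      _ ≤ 1 - (P k ω) ^ (σn (k+1)) := hmin
  -- conclusion
  have hnull : ∀ᵐ ω ∂μ, ¬ ((∀ᶠ n in atTop, B (n + 1) ω = 0) ∨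
      (∀ᶠ n in atTop, B (n + 1) ω = σn (n + 1))) := by
    filter_upwards [hA, hB] with ω h1 h2
    rw [Filter.mem_limsup_iff_frequently_mem] at h1 h2
    rintro (hev | hev)
    · obtain ⟨N, hN⟩ := eventually_atTop.mp hev
      obtain ⟨m, hm, hne⟩ := frequently_atTop.mp h1 (N + 1)
      apply hne
      obtain ⟨l, rfl⟩ : ∃ l, m = l + 1 := ⟨m - 1, by omega⟩
      exact hN l (by omega)
    · obtain ⟨N, hN⟩ := eventually_atTop.mp hev
      obtain ⟨m, hm, hne⟩ := frequently_atTop.mp h2 (N + 1)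
      apply hne
      obtain ⟨l, rfl⟩ : ∃ l, m = l + 1 := ⟨m - 1, by omega⟩
      exact hN l (by omega)
  have := ae_iff.mp hnull
  simpa only [not_not] using this
end

section
/- Let (ξ_n) be adapted to (F_n) and (ε_n) satisfy E[ε_{n+1}|F_n] = 0, E[ε_{n+1}²|F_n] = 1. Suppose |ξ_i| ≤ ζ_n a_i almost surely for all i ≥ n and all n, where ζ_n > 0 is F_n-measurable and square-integrable, and (a_n) is a deterministic square-summable sequence. Then almost surely the series ∑_{i≥0} ξ_i ε_{i+1} converges, and liminf_{n→∞} (ζ_n √A_n)^{-1} ∑_{i≥n} ξ_i ε_{i+1} < ∞, where A_n = ∑_{i≥n} a_i². -/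
open MeasureTheory Filter
open scoped NNReal ENNReal

section Aux

variable {Ω : Type*} {m0 : MeasurableSpace Ω} {μ : Measure Ω}

lemma aux_sm_min {F : MeasurableSpace Ω} {h : Ω → ℝ} (hmeas : StronglyMeasurable[F] h) (M : ℝ) :
    StronglyMeasurable[F] (fun ω => min (h ω) M) :=
  hmeas.inf stronglyMeasurable_const

lemma aux_integrable_mul_of_sq {f g : Ω → ℝ} (hf : AEStronglyMeasurable f μ)
    (hg : AEStronglyMeasurable g μ) (hf2 : Integrable (fun ω => f ω ^ 2) μ)
    (hg2 : Integrable (fun ω => g ω ^ 2) μ) :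
    Integrable (f * g) μ := by
  refine Integrable.mono' (g := fun ω => (f ω ^ 2 + g ω ^ 2) / 2)
    ((hf2.add hg2).div_const 2) (hf.mul hg) ?_
  refine Eventually.of_forall fun ω => ?_
  simp only [Pi.mul_apply, Real.norm_eq_abs, abs_mul]
  nlinarith [sq_nonneg (|f ω| - |g ω|), sq_abs (f ω), sq_abs (g ω), abs_nonneg (f ω),
    abs_nonneg (g ω)]

lemma aux_integrable_mul_condexp_one [IsProbabilityMeasure μ] {F : MeasurableSpace Ω} (hF : F ≤ m0)
    {h ψ : Ω → ℝ} (hmeas : StronglyMeasurable[F] h) (hh0 : ∀ ω, 0 ≤ h ω) (hhi : Integrable h μ)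
    (hψ0 : ∀ ω, 0 ≤ ψ ω) (hψi : Integrable ψ μ) (hcond : μ[ψ|F] =ᵐ[μ] fun _ => (1:ℝ)) :
    Integrable (h * ψ) μ := by
  haveI : SigmaFinite (μ.trim hF) := by infer_instance
  have hle : ∀ M : ℕ, Integrable ((fun ω => min (h ω) M) * ψ) μ := by
    intro M
    refine hψi.bdd_mul (c := M) ((aux_sm_min hmeas M).mono hF).aestronglyMeasurable (Eventually.of_forall fun ω => ?_)
    rw [Real.norm_eq_abs, abs_of_nonneg (le_min (hh0 ω) (Nat.cast_nonneg M))]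
    exact min_le_right _ _
  have hminint : ∀ M : ℕ, Integrable (fun ω => min (h ω) (M:ℝ)) μ := by
    intro M
    refine Integrable.mono' hhi ((aux_sm_min hmeas M).mono hF).aestronglyMeasurable
      (Eventually.of_forall fun ω => ?_)
    rw [Real.norm_eq_abs, abs_of_nonneg (le_min (hh0 ω) (Nat.cast_nonneg M))]
    exact min_le_left _ _
  have hint : ∀ M : ℕ, ∫ ω, min (h ω) M * ψ ω ∂μ ≤ ∫ ω, h ω ∂μ := by
    intro M
    have hcm : μ[(fun ω => min (h ω) M) * ψ|F] =ᵐ[μ] (fun ω => min (h ω) M) * μ[ψ|F] :=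
      condExp_mul_of_stronglyMeasurable_left (aux_sm_min hmeas M) (hle M) hψi
    have h2 : μ[(fun ω => min (h ω) M) * ψ|F] =ᵐ[μ] fun ω => min (h ω) (M:ℝ) := by
      filter_upwards [hcm, hcond] with ω h1 h2
      simp [h1, Pi.mul_apply, h2]
    calc ∫ ω, min (h ω) M * ψ ω ∂μ = ∫ ω, ((fun ω => min (h ω) M) * ψ) ω ∂μ := rfl
      _ = ∫ ω, (μ[(fun ω => min (h ω) M) * ψ|F]) ω ∂μ := (integral_condExp hF).symm
      _ = ∫ ω, min (h ω) M ∂μ := integral_congr_ae h2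
      _ ≤ ∫ ω, h ω ∂μ :=
          integral_mono_ae (hminint M) hhi (Eventually.of_forall fun ω => min_le_left _ _)
  have hlb : ∀ M : ℕ, ∫⁻ ω, ENNReal.ofReal (min (h ω) M * ψ ω) ∂μ
      ≤ ENNReal.ofReal (∫ ω, h ω ∂μ) := by
    intro M
    have hle' : Integrable (fun ω => min (h ω) M * ψ ω) μ := hle M
    rw [← ofReal_integral_eq_lintegral_ofReal hle'
      (Eventually.of_forall fun ω => mul_nonneg (le_min (hh0 ω) (Nat.cast_nonneg M)) (hψ0 ω))]
    exact ENNReal.ofReal_le_ofReal (hint M)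
  have htend : Tendsto (fun M : ℕ => ∫⁻ ω, ENNReal.ofReal (min (h ω) M * ψ ω) ∂μ) atTop
      (nhds (∫⁻ ω, ENNReal.ofReal (h ω * ψ ω) ∂μ)) := by
    refine lintegral_tendsto_of_tendsto_of_monotone
      (fun M => ENNReal.measurable_ofReal.comp_aemeasurable
        ((((aux_sm_min hmeas M).mono hF).aestronglyMeasurable.mul hψi.1).aemeasurable))
      (Eventually.of_forall fun ω M N hMN => ENNReal.ofReal_le_ofReal
        (mul_le_mul_of_nonneg_right (min_le_min le_rfl (Nat.cast_le.2 hMN)) (hψ0 ω)))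
      (Eventually.of_forall fun ω => ?_)
    have hEE : (fun M : ℕ => ENNReal.ofReal (min (h ω) M * ψ ω)) =ᶠ[atTop]
        (fun _ => ENNReal.ofReal (h ω * ψ ω)) := by
      filter_upwards [eventually_ge_atTop ⌈h ω⌉₊] with M hM
      rw [min_eq_left (le_trans (Nat.le_ceil _) (Nat.cast_le.2 hM))]
    exact Tendsto.congr' hEE.symm tendsto_const_nhds
  have hfin : ∫⁻ ω, ENNReal.ofReal (h ω * ψ ω) ∂μ ≤ ENNReal.ofReal (∫ ω, h ω ∂μ) :=
    le_of_tendsto' htend hlb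
  refine ⟨(hmeas.mono hF).aestronglyMeasurable.mul hψi.1, ?_⟩
  show HasFiniteIntegral (fun ω => h ω * ψ ω) μ
  rw [hasFiniteIntegral_iff_ofReal (Eventually.of_forall fun ω => mul_nonneg (hh0 ω) (hψ0 ω))]
  exact lt_of_le_of_lt hfin ENNReal.ofReal_lt_top

lemma aux_integral_mul_condexp_zero [IsProbabilityMeasure μ] {F : MeasurableSpace Ω} (hF : F ≤ m0)
    {f e : Ω → ℝ} (hf : StronglyMeasurable[F] f) (hfe : Integrable (f * e) μ)
    (he : Integrable e μ) (hcond : μ[e|F] =ᵐ[μ] fun _ => (0:ℝ)) :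
    ∫ ω, f ω * e ω ∂μ = 0 := by
  have h1 : μ[f * e|F] =ᵐ[μ] fun _ => (0:ℝ) := by
    filter_upwards [condExp_mul_of_stronglyMeasurable_left hf hfe he, hcond] with ω h1 h2
    simp [h1, h2]
  calc ∫ ω, f ω * e ω ∂μ = ∫ ω, (f * e) ω ∂μ := rfl
    _ = ∫ ω, (μ[f * e|F]) ω ∂μ := (integral_condExp hF).symm
    _ = ∫ ω, (0:ℝ) ∂μ := integral_congr_ae h1
    _ = 0 := integral_zero _ _

lemma aux_integral_mul_condexp_one [IsProbabilityMeasure μ] {F : MeasurableSpace Ω} (hF : F ≤ m0)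
    {f ψ : Ω → ℝ} (hf : StronglyMeasurable[F] f) (hfψ : Integrable (f * ψ) μ)
    (hψ : Integrable ψ μ) (hcond : μ[ψ|F] =ᵐ[μ] fun _ => (1:ℝ)) :
    ∫ ω, f ω * ψ ω ∂μ = ∫ ω, f ω ∂μ := by
  have h1 : μ[f * ψ|F] =ᵐ[μ] f := by
    filter_upwards [condExp_mul_of_stronglyMeasurable_left hf hfψ hψ, hcond] with ω h1 h2
    simp [h1, h2]
  calc ∫ ω, f ω * ψ ω ∂μ = ∫ ω, (f * ψ) ω ∂μ := rfl
    _ = ∫ ω, (μ[f * ψ|F]) ω ∂μ := (integral_condExp hF).symm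
    _ = ∫ ω, f ω ∂μ := integral_congr_ae h1

end Aux

/-- if |ξ_i| ≤ ζ_n a_i a.s. for i ≥ n with ζ_n positive, F_n-measurable,
square-integrable and (a_n) square-summable, then a.s. ∑ ξ_i ε_{i+1} converges and
liminf_n (ζ_n √A_n)^{-1} ∑_{i≥n} ξ_i ε_{i+1} < ∞, where A_n = ∑_{i≥n} a_i². -/
theorem stmt14 {Ω : Type*} {m0 : MeasurableSpace Ω} {μ : Measure Ω}
    [IsProbabilityMeasure μ] (ℱ : Filtration ℕ m0)
    (ξ ε ζ : ℕ → Ω → ℝ) (a : ℕ → ℝ)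
    (hξ : ∀ n, StronglyMeasurable[ℱ n] (ξ n))
    (hεadapted : ∀ n, StronglyMeasurable[ℱ n] (ε n))
    (hεint : ∀ n, Integrable (ε (n + 1)) μ)
    (hεint2 : ∀ n, Integrable (fun ω => (ε (n + 1) ω) ^ 2) μ)
    (hεmean : ∀ n, μ[ε (n + 1) | ℱ n] =ᵐ[μ] fun _ => (0 : ℝ))
    (hεvar : ∀ n, μ[fun ω => (ε (n + 1) ω) ^ 2 | ℱ n] =ᵐ[μ] fun _ => (1 : ℝ))
    (hζmeas : ∀ n, StronglyMeasurable[ℱ n] (ζ n))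
    (hζpos : ∀ n, ∀ᵐ ω ∂μ, 0 < ζ n ω)
    (hζL2 : ∀ n, Integrable (fun ω => (ζ n ω) ^ 2) μ)
    (ha : Summable (fun n => (a n) ^ 2))
    (hdom : ∀ n, ∀ i ≥ n, ∀ᵐ ω ∂μ, |ξ i ω| ≤ ζ n ω * a i) :
    ∀ᵐ ω ∂μ, ∃ l : ℝ,
      Tendsto (fun m => ∑ i ∈ Finset.range m, ξ i ω * ε (i + 1) ω) atTop (nhds l) ∧
      ∃ C : ℝ, ∃ᶠ n in atTop,
        (l - ∑ i ∈ Finset.range n, ξ i ω * ε (i + 1) ω) /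
          (ζ n ω * Real.sqrt (∑' i : ℕ, (a (n + i)) ^ 2)) ≤ C := by
  -- notation
  set u : ℕ → Ω → ℝ := fun i ω => ξ i ω * ε (i + 1) ω with hu
  set S : ℕ → Ω → ℝ := fun m ω => ∑ i ∈ Finset.range m, u i ω with hS
  set A : ℕ → ℝ := fun n => ∑' i : ℕ, (a (n + i)) ^ 2 with hA
  -- basic square-integrability facts
  have hξsm : ∀ i, StronglyMeasurable[ℱ i] (fun ω => ξ i ω ^ 2) := by
    intro i; simp only [pow_two]; exact (hξ i).mul (hξ i)
  have hξsq : ∀ i, Integrable (fun ω => ξ i ω ^ 2) μ := by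
    intro i
    refine Integrable.mono' ((hζL2 i).mul_const (a i ^ 2))
      ((hξsm i).mono (ℱ.le i)).aestronglyMeasurable ?_
    filter_upwards [hdom i i le_rfl, hζpos i] with ω h1 h2
    rw [Real.norm_eq_abs, abs_of_nonneg (sq_nonneg _), ← mul_pow]
    calc ξ i ω ^ 2 = |ξ i ω| ^ 2 := (sq_abs _).symm
      _ ≤ (ζ i ω * a i) ^ 2 := by
          exact pow_le_pow_left₀ (abs_nonneg _) h1 2
  have hu2 : ∀ i, Integrable (fun ω => u i ω ^ 2) μ := by
    intro i
    have := aux_integrable_mul_condexp_one (μ := μ) (ℱ.le i) (hξsm i)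
      (fun ω => sq_nonneg _) (hξsq i) (fun ω => sq_nonneg _) (hεint2 i) (hεvar i)
    exact this.congr (Eventually.of_forall fun ω => by simp [hu, mul_pow])
  have husm : ∀ i, AEStronglyMeasurable (u i) μ := fun i =>
    (((hξ i).mono (ℱ.le i)).mul ((hεadapted (i+1)).mono (ℱ.le (i+1)))).aestronglyMeasurable
  have huint : ∀ i, Integrable (u i) μ := by
    intro i
    have := aux_integrable_mul_of_sq (μ := μ) ((hξ i).mono (ℱ.le i)).aestronglyMeasurable
      ((hεadapted (i+1)).mono (ℱ.le (i+1))).aestronglyMeasurable (hξsq i) (hεint2 i)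
    exact this
  have huumul : ∀ i j, Integrable (u i * u j) μ := fun i j =>
    aux_integrable_mul_of_sq (husm i) (husm j) (hu2 i) (hu2 j)
  -- the key second moment estimate
  have key : ∀ n (M : ℝ) (g : Ω → ℝ), StronglyMeasurable[ℱ n] g → (∀ ω, 0 ≤ g ω) →
      (∀ ω, g ω ≤ M) → ∀ m,
      ∫ ω, (∑ i ∈ Finset.Ico n m, u i ω) ^ 2 * g ω ∂μ
        ≤ (∑ i ∈ Finset.Ico n m, a i ^ 2) * ∫ ω, ζ n ω ^ 2 * g ω ∂μ := by
    intro n M g hgm hg0 hgM m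
    have hgb : AEStronglyMeasurable g μ := (hgm.mono (ℱ.le n)).aestronglyMeasurable
    have hgbdd : ∃ C, ∀ ω, ‖g ω‖ ≤ C :=
      ⟨M, fun ω => by rw [Real.norm_eq_abs, abs_of_nonneg (hg0 ω)]; exact hgM ω⟩
    have II : ∀ i j, Integrable (fun ω => u i ω * u j ω * g ω) μ := by
      intro i j
      exact ((huumul i j).bdd_mul hgb (Eventually.of_forall hgbdd.choose_spec)).congr
        (Eventually.of_forall fun ω => by simp only [Pi.mul_apply]; ring)
    have crossz : ∀ p q, n ≤ p → p < q → ∫ ω, u p ω * u q ω * g ω ∂μ = 0 := by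
      intro p q hnp hpq
      have hf : StronglyMeasurable[ℱ q] (fun ω => u p ω * ξ q ω * g ω) := by
        refine StronglyMeasurable.mul (StronglyMeasurable.mul ?_ ((hξ q))) (hgm.mono (ℱ.mono (hnp.trans hpq.le)))
        exact ((hξ p).mono (ℱ.mono hpq.le)).mul ((hεadapted (p+1)).mono (ℱ.mono (Nat.succ_le_of_lt hpq)))
      have hfe : Integrable ((fun ω => u p ω * ξ q ω * g ω) * ε (q+1)) μ := by
        refine ((huumul p q).bdd_mul hgb (Eventually.of_forall hgbdd.choose_spec)).congr
          (Eventually.of_forall fun ω => ?_)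
        simp only [Pi.mul_apply, hu]; ring
      have h0 := aux_integral_mul_condexp_zero (μ := μ) (ℱ.le q) hf hfe (hεint q) (hεmean q)
      calc ∫ ω, u p ω * u q ω * g ω ∂μ
          = ∫ ω, (u p ω * ξ q ω * g ω) * ε (q+1) ω ∂μ := by
            refine integral_congr_ae (Eventually.of_forall fun ω => ?_)
            simp only [hu]; ring
        _ = 0 := h0
    have hbint : Integrable (fun ω => ζ n ω ^ 2 * g ω) μ :=
      ((hζL2 n).bdd_mul hgb (Eventually.of_forall hgbdd.choose_spec)).congr (Eventually.of_forall fun ω => by ring)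
    have diag : ∀ i, n ≤ i → ∫ ω, u i ω ^ 2 * g ω ∂μ
        ≤ a i ^ 2 * ∫ ω, ζ n ω ^ 2 * g ω ∂μ := by
      intro i hni
      have hfm : StronglyMeasurable[ℱ i] (fun ω => ξ i ω ^ 2 * g ω) :=
        (hξsm i).mul (hgm.mono (ℱ.mono hni))
      have hfi : Integrable (fun ω => ξ i ω ^ 2 * g ω) μ :=
        ((hξsq i).bdd_mul hgb (Eventually.of_forall hgbdd.choose_spec)).congr (Eventually.of_forall fun ω => by ring)
      have hfψ : Integrable ((fun ω => ξ i ω ^ 2 * g ω) * fun ω => ε (i+1) ω ^ 2) μ := by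
        refine ((hu2 i).bdd_mul hgb (Eventually.of_forall hgbdd.choose_spec)).congr (Eventually.of_forall fun ω => ?_)
        simp only [Pi.mul_apply, hu]; ring
      have h1 : ∫ ω, (ξ i ω ^ 2 * g ω) * ε (i+1) ω ^ 2 ∂μ = ∫ ω, ξ i ω ^ 2 * g ω ∂μ :=
        aux_integral_mul_condexp_one (ℱ.le i) hfm hfψ (hεint2 i) (hεvar i)
      have h2 : ∫ ω, u i ω ^ 2 * g ω ∂μ = ∫ ω, (ξ i ω ^ 2 * g ω) * ε (i+1) ω ^ 2 ∂μ :=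
        integral_congr_ae (Eventually.of_forall fun ω => by simp only [hu]; ring)
      rw [h2, h1]
      have hmono : ∫ ω, ξ i ω ^ 2 * g ω ∂μ ≤ ∫ ω, a i ^ 2 * (ζ n ω ^ 2 * g ω) ∂μ := by
        refine integral_mono_ae hfi (hbint.const_mul _) ?_
        filter_upwards [hdom n i hni] with ω h1
        have hsq : ξ i ω ^ 2 ≤ (ζ n ω * a i) ^ 2 := by
          rw [← sq_abs]; exact pow_le_pow_left₀ (abs_nonneg _) h1 2
        calc ξ i ω ^ 2 * g ω ≤ (ζ n ω * a i) ^ 2 * g ω :=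
              mul_le_mul_of_nonneg_right hsq (hg0 ω)
          _ = a i ^ 2 * (ζ n ω ^ 2 * g ω) := by ring
      rw [integral_const_mul] at hmono
      exact hmono
    have hexp : ∀ ω, (∑ i ∈ Finset.Ico n m, u i ω) ^ 2 * g ω
        = ∑ i ∈ Finset.Ico n m, ∑ j ∈ Finset.Ico n m, u i ω * u j ω * g ω := by
      intro ω
      rw [sq, Finset.sum_mul_sum, Finset.sum_mul]
      exact Finset.sum_congr rfl fun i _ => by rw [Finset.sum_mul]
    calc ∫ ω, (∑ i ∈ Finset.Ico n m, u i ω) ^ 2 * g ω ∂μ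
        = ∑ i ∈ Finset.Ico n m, ∑ j ∈ Finset.Ico n m, ∫ ω, u i ω * u j ω * g ω ∂μ := by
          rw [integral_congr_ae (Eventually.of_forall fun ω => hexp ω),
            integral_finset_sum _ (fun i _ => integrable_finset_sum _ fun j _ => II i j)]
          exact Finset.sum_congr rfl fun i _ => integral_finset_sum _ fun j _ => II i j
      _ = ∑ i ∈ Finset.Ico n m, ∫ ω, u i ω ^ 2 * g ω ∂μ := by
          refine Finset.sum_congr rfl fun i hi => ?_
          rw [Finset.sum_eq_single_of_mem i hi]
          · exact integral_congr_ae (Eventually.of_forall fun ω => by show u i ω * u i ω * g ω = u i ω ^ 2 * g ω; ring)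
          · intro j hj hji
            rcases hji.lt_or_gt with h | h
            · have hcomm : ∫ ω, u i ω * u j ω * g ω ∂μ = ∫ ω, u j ω * u i ω * g ω ∂μ :=
                integral_congr_ae (Eventually.of_forall fun ω => by ring)
              rw [hcomm]
              exact crossz j i (Finset.mem_Ico.1 hj).1 h
            · exact crossz i j (Finset.mem_Ico.1 hi).1 h
      _ ≤ ∑ i ∈ Finset.Ico n m, a i ^ 2 * ∫ ω, ζ n ω ^ 2 * g ω ∂μ :=
          Finset.sum_le_sum fun i hi => diag i (Finset.mem_Ico.1 hi).1
      _ = (∑ i ∈ Finset.Ico n m, a i ^ 2) * ∫ ω, ζ n ω ^ 2 * g ω ∂μ :=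
          (Finset.sum_mul _ _ _).symm
  -- integrability of squared partial tail sums against bounded g
  have sqg_int : ∀ (n m : ℕ) (g : Ω → ℝ), AEStronglyMeasurable g μ → (∃ C, ∀ ω, ‖g ω‖ ≤ C) →
      Integrable (fun ω => (∑ i ∈ Finset.Ico n m, u i ω) ^ 2 * g ω) μ := by
    intro n m g hgb hgbdd
    have II2 : ∀ i j : ℕ, Integrable (fun ω => u i ω * u j ω * g ω) μ := fun i j =>
      ((huumul i j).bdd_mul hgb (Eventually.of_forall hgbdd.choose_spec)).congr (Eventually.of_forall fun ω => by
        simp only [Pi.mul_apply]; ring)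
    refine (integrable_finset_sum _ fun i (_ : i ∈ Finset.Ico n m) =>
      integrable_finset_sum _ fun j (_ : j ∈ Finset.Ico n m) =>
      II2 i j).congr (Eventually.of_forall fun ω => ?_)
    show ∑ i ∈ Finset.Ico n m, ∑ j ∈ Finset.Ico n m, u i ω * u j ω * g ω
      = (∑ i ∈ Finset.Ico n m, u i ω) ^ 2 * g ω
    rw [sq, Finset.sum_mul_sum, Finset.sum_mul]
    exact Finset.sum_congr rfl fun i _ => by rw [Finset.sum_mul]
  -- the martingale structure
  have hadp : StronglyAdapted ℱ S := by
    intro m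
    refine Finset.stronglyMeasurable_fun_sum _ fun i hi => ?_
    have him : i + 1 ≤ m := Finset.mem_range.1 hi
    exact ((hξ i).mono (ℱ.mono (Nat.le_of_succ_le him))).mul
      ((hεadapted (i+1)).mono (ℱ.mono him))
  have hSint : ∀ m, Integrable (S m) μ := fun m => integrable_finset_sum _ fun i _ => huint i
  have hmart : Martingale S ℱ μ := by
    refine martingale_nat hadp hSint fun i => ?_
    have hsucc : S (i+1) = S i + u i := by
      funext ω; simp [hS, Finset.sum_range_succ]
    have hcu : μ[u i|ℱ i] =ᵐ[μ] fun _ => (0:ℝ) := by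
      have hrfl : μ[u i|ℱ i] = μ[ξ i * ε (i+1)|ℱ i] := rfl
      have hmul : μ[ξ i * ε (i+1)|ℱ i] =ᵐ[μ] ξ i * μ[ε (i+1)|ℱ i] :=
        condExp_mul_of_stronglyMeasurable_left (hξ i) (huint i) (hεint i)
      rw [hrfl]
      filter_upwards [hmul, hεmean i] with ω h1 h2
      simp [h1, h2]
    have hfinal : μ[S (i+1)|ℱ i] =ᵐ[μ] S i := by
      rw [hsucc]
      calc μ[S i + u i|ℱ i] =ᵐ[μ] μ[S i|ℱ i] + μ[u i|ℱ i] := condExp_add (hSint i) (huint i) _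
        _ =ᵐ[μ] S i + fun _ => (0:ℝ) := by
            refine EventuallyEq.add ?_ hcu
            rw [condExp_of_stronglyMeasurable (ℱ.le i) (hadp i) (hSint i)]
        _ = S i := by funext ω; simp
    exact hfinal.symm
  -- L¹ boundedness and a.e. convergence
  have hζ0nn : (0:ℝ) ≤ ∫ ω, ζ 0 ω ^ 2 ∂μ := integral_nonneg fun ω => sq_nonneg _
  set B : ℝ := (∑' i, a i ^ 2) * ∫ ω, ζ 0 ω ^ 2 ∂μ with hB
  have hS2int : ∀ m, Integrable (fun ω => S m ω ^ 2) μ := by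
    intro m
    have := sqg_int 0 m (fun _ => (1:ℝ)) aestronglyMeasurable_const
      ⟨1, fun ω => by simp⟩
    refine this.congr (Eventually.of_forall fun ω => ?_)
    show (∑ i ∈ Finset.Ico 0 m, u i ω) ^ 2 * 1 = S m ω ^ 2
    rw [mul_one, ← Finset.range_eq_Ico]
  have hES2 : ∀ m, ∫ ω, S m ω ^ 2 ∂μ ≤ B := by
    intro m
    have h1 := key 0 1 (fun _ => (1:ℝ)) stronglyMeasurable_const (fun _ => zero_le_one)
      (fun _ => le_rfl) m
    simp only [mul_one] at h1
    have h2 : ∫ ω, (∑ i ∈ Finset.Ico 0 m, u i ω) ^ 2 ∂μ = ∫ ω, S m ω ^ 2 ∂μ := by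
      refine integral_congr_ae (Eventually.of_forall fun ω => ?_)
      show (∑ i ∈ Finset.Ico 0 m, u i ω) ^ 2 = S m ω ^ 2
      rw [← Finset.range_eq_Ico]
    rw [h2] at h1
    refine h1.trans (mul_le_mul_of_nonneg_right
      (ha.sum_le_tsum _ (fun i _ => sq_nonneg _)) hζ0nn)
  have hbdd : ∀ m, eLpNorm (S m) 1 μ ≤ (((1 + B).toNNReal : ℝ≥0) : ℝ≥0∞) := by
    intro m
    have h1 : eLpNorm (S m) 1 μ = ENNReal.ofReal (∫ ω, ‖S m ω‖ ∂μ) := by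
      rw [eLpNorm_one_eq_lintegral_enorm, ← ofReal_integral_norm_eq_lintegral_enorm (hSint m)]
    have h2 : ∫ ω, ‖S m ω‖ ∂μ ≤ 1 + B := by
      have h3 : ∫ ω, ‖S m ω‖ ∂μ ≤ ∫ ω, 1 + S m ω ^ 2 ∂μ := by
        refine integral_mono_ae (hSint m).norm ((integrable_const 1).add (hS2int m))
          (Eventually.of_forall fun ω => ?_)
        show ‖S m ω‖ ≤ 1 + S m ω ^ 2
        rw [Real.norm_eq_abs]
        nlinarith [sq_nonneg (|S m ω| - 1), sq_abs (S m ω), abs_nonneg (S m ω)]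
      rw [integral_add (integrable_const 1) (hS2int m), integral_const] at h3
      simp only [measure_univ, probReal_univ, ENNReal.toReal_one, smul_eq_mul, one_mul] at h3
      linarith [hES2 m]
    rw [h1]
    calc ENNReal.ofReal (∫ ω, ‖S m ω‖ ∂μ) ≤ ENNReal.ofReal (1 + B) :=
          ENNReal.ofReal_le_ofReal h2
      _ = (((1 + B).toNNReal : ℝ≥0) : ℝ≥0∞) := rfl
  set L : Ω → ℝ := ℱ.limitProcess S μ with hL
  have hconv : ∀ᵐ ω ∂μ, Tendsto (fun m => S m ω) atTop (nhds (L ω)) :=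
    hmart.submartingale.ae_tendsto_limitProcess hbdd
  -- Part 2 : Chebychev/Markov liminf bound
  have hmeasS : ∀ m, Measurable (S m) := fun m => ((hadp m).mono (ℱ.le m)).measurable
  have hmeasL : Measurable L := by
    exact (Filtration.stronglyMeasurable_limit_process' (f := S) (ℱ := ℱ) (μ := μ)).measurable
  set lam : ℕ → Ω → ℝ := fun n ω => ζ n ω * Real.sqrt (A n) with hlam
  have hlam_meas : ∀ n, StronglyMeasurable[ℱ n] (lam n) := fun n =>
    (hζmeas n).mul stronglyMeasurable_const
  have hlam_meas0 : ∀ n, Measurable (lam n) := fun n =>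
    ((hlam_meas n).mono (ℱ.le n)).measurable
  have hAnn : ∀ n, 0 ≤ A n := fun n => tsum_nonneg fun i => sq_nonneg _
  have hsummA : ∀ n, Summable (fun i => a (n + i) ^ 2) := by
    intro n
    refine (((summable_nat_add_iff n).2 ha)).congr fun i => ?_
    rw [add_comm]
  have hIcoA : ∀ n m, ∑ i ∈ Finset.Ico n m, a i ^ 2 ≤ A n := by
    intro n m
    rcases le_or_gt n m with h | h
    · rw [Finset.sum_Ico_eq_sum_range]
      exact (hsummA n).sum_le_tsum _ (fun i _ => sq_nonneg _)
    · rw [Finset.Ico_eq_empty (not_lt.2 h.le)]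
      simpa using hAnn n
  set T : ℕ → Ω → ℝ := fun n ω => L ω - S n ω with hT
  have hmeasT : ∀ n, Measurable (T n) := fun n => hmeasL.sub (hmeasS n)
  have ginv_meas : ∀ n, StronglyMeasurable[ℱ n] (fun ω => (lam n ω ^ 2)⁻¹) := fun n =>
    (((hlam_meas n).measurable.pow_const 2).inv).stronglyMeasurable
  have ginv_nonneg : ∀ n (ω : Ω), (0:ℝ) ≤ (lam n ω ^ 2)⁻¹ := fun n ω =>
    inv_nonneg.2 (sq_nonneg _)
  have bound1 : ∀ n (M : ℕ) m,
      ∫ ω, (∑ i ∈ Finset.Ico n m, u i ω) ^ 2 * min ((lam n ω ^ 2)⁻¹) M ∂μ ≤ 1 := by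
    intro n M m
    set g : Ω → ℝ := fun ω => min ((lam n ω ^ 2)⁻¹) M with hg
    have hgm : StronglyMeasurable[ℱ n] g := aux_sm_min (ginv_meas n) M
    have hg0 : ∀ ω, 0 ≤ g ω := fun ω => le_min (ginv_nonneg n ω) (Nat.cast_nonneg M)
    have hgM : ∀ ω, g ω ≤ M := fun ω => min_le_right _ _
    refine (key n M g hgm hg0 hgM m).trans ?_
    have hgb : AEStronglyMeasurable g μ := (hgm.mono (ℱ.le n)).aestronglyMeasurable
    have hbint : Integrable (fun ω => ζ n ω ^ 2 * g ω) μ :=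
      ((hζL2 n).bdd_mul (c := M) hgb (Eventually.of_forall fun ω => by
        rw [Real.norm_eq_abs, abs_of_nonneg (hg0 ω)]; exact hgM ω)).congr
        (Eventually.of_forall fun ω => by ring)
    have hζg : ∀ᵐ ω ∂μ, ζ n ω ^ 2 * g ω ≤ (A n)⁻¹ := by
      filter_upwards [hζpos n] with ω hζω
      have hlam2 : lam n ω ^ 2 = ζ n ω ^ 2 * A n := by
        simp only [hlam, mul_pow, Real.sq_sqrt (hAnn n)]
      calc ζ n ω ^ 2 * g ω ≤ ζ n ω ^ 2 * (lam n ω ^ 2)⁻¹ :=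
            mul_le_mul_of_nonneg_left (min_le_left _ _) (sq_nonneg _)
        _ ≤ (A n)⁻¹ := by
            rw [hlam2]
            rcases eq_or_lt_of_le (hAnn n) with h0 | h0
            · simp [← h0]
            · rw [mul_inv, ← mul_assoc, mul_inv_cancel₀ (by positivity), one_mul]
    have h2 : ∫ ω, ζ n ω ^ 2 * g ω ∂μ ≤ (A n)⁻¹ := by
      have := integral_mono_ae hbint (integrable_const _) hζg
      simpa using this
    have h3 : (0:ℝ) ≤ ∫ ω, ζ n ω ^ 2 * g ω ∂μ :=
      integral_nonneg fun ω => mul_nonneg (sq_nonneg _) (hg0 ω)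
    calc (∑ i ∈ Finset.Ico n m, a i ^ 2) * ∫ ω, ζ n ω ^ 2 * g ω ∂μ
        ≤ A n * (A n)⁻¹ := mul_le_mul (hIcoA n m) h2 h3 (hAnn n)
      _ ≤ 1 := by
          rcases eq_or_lt_of_le (hAnn n) with h0 | h0
          · simp [← h0]
          · rw [mul_inv_cancel₀ h0.ne']
  have lintM : ∀ n (M : ℕ),
      ∫⁻ ω, ENNReal.ofReal (T n ω ^ 2 * min ((lam n ω ^ 2)⁻¹) M) ∂μ ≤ 1 := by
    intro n M
    set g : Ω → ℝ := fun ω => min ((lam n ω ^ 2)⁻¹) M with hg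
    have hg0 : ∀ ω, 0 ≤ g ω := fun ω => le_min (ginv_nonneg n ω) (Nat.cast_nonneg M)
    have hgM : ∀ ω, g ω ≤ M := fun ω => min_le_right _ _
    have hgmeas0 : Measurable g :=
      (((hlam_meas0 n).pow_const 2).inv).min measurable_const
    have hgb : AEStronglyMeasurable g μ := hgmeas0.aestronglyMeasurable
    have hgbdd : ∃ C, ∀ ω, ‖g ω‖ ≤ C :=
      ⟨M, fun ω => by rw [Real.norm_eq_abs, abs_of_nonneg (hg0 ω)]; exact hgM ω⟩
    have hmeasF : ∀ m, Measurable fun ω => ENNReal.ofReal ((S m ω - S n ω) ^ 2 * g ω) :=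
      fun m => ENNReal.measurable_ofReal.comp
        ((((hmeasS m).sub (hmeasS n)).pow_const 2).mul hgmeas0)
    have hFatou : ∫⁻ ω, ENNReal.ofReal (T n ω ^ 2 * g ω) ∂μ
        ≤ liminf (fun m => ∫⁻ ω, ENNReal.ofReal ((S m ω - S n ω) ^ 2 * g ω) ∂μ) atTop := by
      refine le_trans (le_of_eq ?_) (lintegral_liminf_le hmeasF)
      refine lintegral_congr_ae ?_
      filter_upwards [hconv] with ω hω
      have htt : Tendsto (fun m => ENNReal.ofReal ((S m ω - S n ω) ^ 2 * g ω)) atTop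
          (nhds (ENNReal.ofReal (T n ω ^ 2 * g ω))) := by
        refine (ENNReal.continuous_ofReal.tendsto _).comp ?_
        have h1 : Tendsto (fun m => S m ω - S n ω) atTop (nhds (T n ω)) := hω.sub_const _
        exact (h1.pow 2).mul_const _
      exact htt.liminf_eq.symm
    have hev : ∀ᶠ m in atTop,
        (∫⁻ ω, ENNReal.ofReal ((S m ω - S n ω) ^ 2 * g ω) ∂μ) ≤ 1 := by
      filter_upwards [eventually_ge_atTop n] with m hm
      have heq : ∀ ω, S m ω - S n ω = ∑ i ∈ Finset.Ico n m, u i ω := fun ω =>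
        (Finset.sum_Ico_eq_sub _ hm).symm
      have hint2 : Integrable (fun ω => (S m ω - S n ω) ^ 2 * g ω) μ :=
        (sqg_int n m g hgb hgbdd).congr (Eventually.of_forall fun ω => by
          show (∑ i ∈ Finset.Ico n m, u i ω) ^ 2 * g ω = (S m ω - S n ω) ^ 2 * g ω
          rw [heq ω])
      rw [← ofReal_integral_eq_lintegral_ofReal hint2
        (Eventually.of_forall fun ω => mul_nonneg (sq_nonneg _) (hg0 ω))]
      have hb := bound1 n M m
      have heqi : ∫ ω, (S m ω - S n ω) ^ 2 * g ω ∂μ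
          = ∫ ω, (∑ i ∈ Finset.Ico n m, u i ω) ^ 2 * g ω ∂μ :=
        integral_congr_ae (Eventually.of_forall fun ω => by
          show (S m ω - S n ω) ^ 2 * g ω = (∑ i ∈ Finset.Ico n m, u i ω) ^ 2 * g ω
          rw [heq ω])
      calc ENNReal.ofReal (∫ ω, (S m ω - S n ω) ^ 2 * g ω ∂μ)
          ≤ ENNReal.ofReal 1 := ENNReal.ofReal_le_ofReal (by rw [heqi]; exact hb)
        _ = 1 := ENNReal.ofReal_one
    refine hFatou.trans ?_
    calc liminf (fun m => ∫⁻ ω, ENNReal.ofReal ((S m ω - S n ω) ^ 2 * g ω) ∂μ) atTop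
        ≤ liminf (fun _ => (1:ℝ≥0∞)) atTop := liminf_le_liminf hev
      _ = 1 := liminf_const _
  have lintinf : ∀ n, ∫⁻ ω, ENNReal.ofReal (T n ω ^ 2 * (lam n ω ^ 2)⁻¹) ∂μ ≤ 1 := by
    intro n
    refine le_of_tendsto' (lintegral_tendsto_of_tendsto_of_monotone
      (fun M : ℕ => (ENNReal.measurable_ofReal.comp (((hmeasT n).pow_const 2).mul
        ((((hlam_meas0 n).pow_const 2).inv).min measurable_const))).aemeasurable)
      (Eventually.of_forall fun ω M N hMN => ENNReal.ofReal_le_ofReal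
        (mul_le_mul_of_nonneg_left (min_le_min le_rfl (Nat.cast_le.2 hMN)) (sq_nonneg _)))
      (Eventually.of_forall fun ω => ?_)) (lintM n)
    have hEE : (fun M : ℕ => ENNReal.ofReal (T n ω ^ 2 * min ((lam n ω ^ 2)⁻¹) M)) =ᶠ[atTop]
        (fun _ => ENNReal.ofReal (T n ω ^ 2 * (lam n ω ^ 2)⁻¹)) := by
      filter_upwards [eventually_ge_atTop ⌈(lam n ω ^ 2)⁻¹⌉₊] with M hM
      rw [min_eq_left (le_trans (Nat.le_ceil _) (Nat.cast_le.2 hM))]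
    exact Tendsto.congr' hEE.symm tendsto_const_nhds
  have markov : ∀ (n k : ℕ), μ {ω | (k:ℝ) < T n ω / lam n ω}
      ≤ (ENNReal.ofReal ((k:ℝ) ^ 2))⁻¹ := by
    intro n k
    have hsub : {ω | (k:ℝ) < T n ω / lam n ω} ⊆
        {ω | ENNReal.ofReal ((k:ℝ) ^ 2) ≤ ENNReal.ofReal (T n ω ^ 2 * (lam n ω ^ 2)⁻¹)} := by
      intro ω hω
      simp only [Set.mem_setOf_eq] at hω ⊢
      refine ENNReal.ofReal_le_ofReal ?_
      have h0 : (0:ℝ) ≤ (k:ℝ) := Nat.cast_nonneg k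
      have h1 : (k:ℝ) ^ 2 ≤ (T n ω / lam n ω) ^ 2 := by nlinarith
      calc ((k:ℝ)) ^ 2 ≤ (T n ω / lam n ω) ^ 2 := h1
        _ = T n ω ^ 2 * (lam n ω ^ 2)⁻¹ := by rw [div_pow, div_eq_mul_inv]
    refine (measure_mono hsub).trans ?_
    refine ENNReal.le_inv_iff_mul_le.2 ?_
    rw [mul_comm]
    refine le_trans (mul_meas_ge_le_lintegral₀ ?_ _) (lintinf n)
    exact (ENNReal.measurable_ofReal.comp (((hmeasT n).pow_const 2).mul
      (((hlam_meas0 n).pow_const 2).inv))).aemeasurable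
  have eventual : ∀ k : ℕ, μ {ω | ∀ᶠ n in atTop, (k:ℝ) < T n ω / lam n ω}
      ≤ (ENNReal.ofReal ((k:ℝ) ^ 2))⁻¹ := by
    intro k
    have hset : {ω | ∀ᶠ n in atTop, (k:ℝ) < T n ω / lam n ω}
        = ⋃ N, {ω | ∀ n, N ≤ n → (k:ℝ) < T n ω / lam n ω} := by
      ext ω
      simp only [Set.mem_setOf_eq, Set.mem_iUnion, eventually_atTop]
    rw [hset]
    have hmono : Monotone (fun N => {ω | ∀ n, N ≤ n → (k:ℝ) < T n ω / lam n ω}) := by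
      intro N N' hNN' ω hω n hn
      exact hω n (hNN'.trans hn)
    refine le_of_tendsto' (tendsto_measure_iUnion_atTop hmono) fun N => ?_
    exact (measure_mono (fun ω (hω : ∀ n, N ≤ n → (k:ℝ) < T n ω / lam n ω) =>
      hω N le_rfl)).trans (markov N k)
  have hbad : μ (⋂ k : ℕ, {ω | ∀ᶠ n in atTop, (k:ℝ) < T n ω / lam n ω}) = 0 := by
    refine le_antisymm ?_ zero_le
    refine ge_of_tendsto ENNReal.tendsto_inv_nat_nhds_zero ?_
    filter_upwards [eventually_ge_atTop 1] with k hk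
    refine le_trans (measure_mono (Set.iInter_subset _ k)) ((eventual k).trans ?_)
    refine ENNReal.inv_le_inv' ?_
    have h1 : (1:ℝ) ≤ (k:ℝ) := by exact_mod_cast hk
    calc ((k:ℕ) : ℝ≥0∞) = ENNReal.ofReal ((k:ℝ)) := by rw [ENNReal.ofReal_natCast]
      _ ≤ ENNReal.ofReal ((k:ℝ) ^ 2) := ENNReal.ofReal_le_ofReal (by nlinarith)
  have hbadc : ∀ᵐ ω ∂μ, ω ∉ ⋂ k : ℕ, {ω | ∀ᶠ n in atTop, (k:ℝ) < T n ω / lam n ω} :=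
    measure_eq_zero_iff_ae_notMem.1 hbad
  filter_upwards [hconv, hbadc] with ω hω hbadω
  refine ⟨L ω, hω, ?_⟩
  simp only [Set.mem_iInter, Set.mem_setOf_eq, not_forall] at hbadω
  obtain ⟨k, hk⟩ := hbadω
  refine ⟨(k:ℝ), ?_⟩
  rw [Filter.not_eventually] at hk
  refine hk.mono fun n hn => ?_
  exact not_lt.1 hn
end

section
/- Let α > 1, τ₀ ≥ 3 integer, σ_n ≥ 1, τ_n = τ₀ + ∑_{i≤n}σ_i, and set δ_n = 1/log²τ_n. If the sequence ρ_n = σ_{n+1}/τ_n is either bounded or tends to infinity, then ∑_{n≥0} δ_n σ_{n+1}/τ_{n+1} < ∞. -/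
open Filter

private lemma log_ge_frac (x : ℝ) (hx : 0 ≤ x) : x / (1 + x) ≤ Real.log (1 + x) := by
  have h1 : (0:ℝ) < 1 + x := by linarith
  have h2 := Real.log_le_sub_one_of_pos (x := 1/(1+x)) (by positivity)
  rw [one_div, Real.log_inv] at h2
  have h3 : x / (1 + x) = 1 - (1+x)⁻¹ := by field_simp; ring
  rw [h3]
  linarith

/-- with δ_n = 1/log²τ_n, if ρ_n = σ_{n+1}/τ_n is bounded or tends
to infinity, then ∑ δ_n σ_{n+1}/τ_{n+1} < ∞.  (Here `σ n` denotes σ_{n+1}.) -/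
theorem stmt19 (τ0 : ℕ) (hτ0 : 3 ≤ τ0) (σ : ℕ → ℕ) (hσ : ∀ n, 1 ≤ σ n)
    (hρ : (∃ C : ℝ, ∀ n, (σ n : ℝ) / ((τ0 + ∑ i ∈ Finset.range n, σ i : ℕ) : ℝ) ≤ C) ∨
      Tendsto (fun n => (σ n : ℝ) / ((τ0 + ∑ i ∈ Finset.range n, σ i : ℕ) : ℝ))
        atTop atTop) :
    Summable (fun n =>
      (1 / (Real.log ((τ0 + ∑ i ∈ Finset.range n, σ i : ℕ) : ℝ)) ^ 2) *
        (σ n : ℝ) / ((τ0 + ∑ i ∈ Finset.range (n + 1), σ i : ℕ) : ℝ)) := by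
  set τ : ℕ → ℝ := fun n => ((τ0 + ∑ i ∈ Finset.range n, σ i : ℕ) : ℝ) with hτdef
  have hτ3 : ∀ n, (3:ℝ) ≤ τ n := by
    intro n
    have h : (3:ℕ) ≤ τ0 + ∑ i ∈ Finset.range n, σ i := le_trans hτ0 (Nat.le_add_right _ _)
    show (3:ℝ) ≤ ((τ0 + ∑ i ∈ Finset.range n, σ i : ℕ) : ℝ)
    exact_mod_cast h
  have hτpos : ∀ n, (0:ℝ) < τ n := fun n => lt_of_lt_of_le (by norm_num) (hτ3 n)
  have hτsucc : ∀ n, τ (n+1) = τ n + σ n := by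
    intro n
    simp only [hτdef, Finset.sum_range_succ]
    push_cast
    ring
  have hσ1 : ∀ n, (1:ℝ) ≤ (σ n : ℝ) := by
    intro n; exact_mod_cast hσ n
  have hL1 : ∀ n, 1 ≤ Real.log (τ n) := by
    intro n
    have he : Real.exp 1 ≤ τ n := by
      have := Real.exp_one_lt_d9
      have := hτ3 n
      linarith [Real.exp_one_lt_d9]
    calc (1:ℝ) = Real.log (Real.exp 1) := (Real.log_exp 1).symm
    _ ≤ Real.log (τ n) := Real.log_le_log (Real.exp_pos 1) he
  have hLpos : ∀ n, 0 < Real.log (τ n) := fun n => lt_of_lt_of_le one_pos (hL1 n)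
  set f : ℕ → ℝ := fun n => (1 / (Real.log (τ n)) ^ 2) * (σ n : ℝ) / τ (n+1) with hfdef
  have hf_nonneg : ∀ n, 0 ≤ f n := by
    intro n
    have := hLpos n
    have := hτpos (n+1)
    positivity
  show Summable f
  rcases hρ with ⟨C, hC⟩ | htend
  · -- Case 1: ρ bounded
    have hC0 : 0 ≤ C := le_trans (by positivity) (hC 0)
    set a : ℕ → ℝ := fun n => 1 / Real.log (τ n) with hadef
    have key : ∀ n, f n ≤ (1 + C) * (a n - a (n+1)) := by
      intro n
      set L := Real.log (τ n) with hL
      set L' := Real.log (τ (n+1)) with hL'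
      have hLp : 0 < L := hLpos n
      have hL'p : 0 < L' := hLpos (n+1)
      have hL1' : 1 ≤ L := hL1 n
      have ht : 0 < τ n := hτpos n
      have ht' : 0 < τ (n+1) := hτpos (n+1)
      have hs : (0:ℝ) < σ n := lt_of_lt_of_le one_pos (hσ1 n)
      -- L' - L = log(1 + σ n / τ n)
      have hdiff : L' - L = Real.log (1 + (σ n : ℝ) / τ n) := by
        rw [hL, hL', ← Real.log_div (ne_of_gt ht') (ne_of_gt ht)]
        congr 1
        rw [hτsucc n]
        field_simp
      -- lower bound: σ n / τ (n+1) ≤ L' - L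
      have hlow : (σ n : ℝ) / τ (n+1) ≤ L' - L := by
        rw [hdiff]
        have := log_ge_frac ((σ n : ℝ) / τ n) (by positivity)
        have heq : (σ n : ℝ) / τ n / (1 + (σ n : ℝ) / τ n) = (σ n : ℝ) / τ (n+1) := by
          rw [hτsucc n]
          field_simp
        linarith [heq ▸ this]
      -- upper bound: L' ≤ (1+C) * L
      have hup : L' ≤ (1 + C) * L := by
        have h1 : (σ n : ℝ) / τ n ≤ C := hC n
        have h2 : Real.log (1 + (σ n : ℝ) / τ n) ≤ Real.log (1 + C) := by
          apply Real.log_le_log (by positivity)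
          linarith
        have h3 : Real.log (1 + C) ≤ C := by
          have := Real.log_le_sub_one_of_pos (x := 1 + C) (by linarith)
          linarith
        have h4 : L' - L ≤ C := by rw [hdiff]; linarith
        nlinarith
      -- combine
      have hae : a n - a (n+1) = (L' - L) / (L * L') := by
        simp only [hadef]
        rw [← hL, ← hL']
        field_simp
      rw [hae, hfdef]
      have hfe : (1 / L ^ 2) * (σ n : ℝ) / τ (n+1) = (σ n : ℝ) / τ (n+1) / L^2 := by
        ring
      show (1 / L ^ 2) * (σ n : ℝ) / τ (n+1) ≤ (1 + C) * ((L' - L) / (L * L'))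
      rw [hfe]
      have hd0 : (0:ℝ) ≤ L' - L := le_trans (by positivity) hlow
      have h5 : (σ n : ℝ) / τ (n+1) / L^2 ≤ (L'-L)/L^2 := by gcongr
      have h6 : (L'-L)/L^2 ≤ (1+C) * ((L'-L)/(L*L')) := by
        rw [mul_div_assoc', div_le_div_iff₀ (by positivity) (by positivity)]
        nlinarith [mul_le_mul_of_nonneg_left hup (mul_nonneg hd0 hLp.le)]
      linarith
    apply summable_of_sum_range_le hf_nonneg (c := (1 + C) * a 0)
    intro N
    calc ∑ i ∈ Finset.range N, f i ≤ ∑ i ∈ Finset.range N, (1 + C) * (a i - a (i+1)) :=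
          Finset.sum_le_sum (fun i _ => key i)
    _ = (1 + C) * ∑ i ∈ Finset.range N, (a i - a (i+1)) := by rw [Finset.mul_sum]
    _ = (1 + C) * (a 0 - a N) := by rw [Finset.sum_range_sub' a N]
    _ ≤ (1 + C) * a 0 := by
        have haN : 0 ≤ a N := le_of_lt (div_pos one_pos (hLpos N))
        nlinarith [hC0]
  · -- Case 2: ρ → ∞
    obtain ⟨m, hm⟩ := (htend.eventually (eventually_ge_atTop (1:ℝ))).exists_forall_of_atTop
    -- hm : ∀ n ≥ m, 1 ≤ σ n / τ n
    have hτσ : ∀ n, m ≤ n → τ n ≤ (σ n : ℝ) := by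
      intro n hn
      have := hm n hn
      rw [le_div_iff₀ (hτpos n)] at this
      linarith
    have hpow : ∀ n, 3 * 2 ^ n ≤ τ (n + m) := by
      intro n
      induction n with
      | zero => simpa using hτ3 m
      | succ k ih =>
        have h1 : τ (k + m) ≤ (σ (k + m) : ℝ) := hτσ (k + m) (Nat.le_add_left m k)
        have h2 : τ (k + 1 + m) = τ (k + m) + σ (k + m) := by
          have : k + 1 + m = (k + m) + 1 := by ring
          rw [this, hτsucc]
        rw [h2]
        rw [pow_succ]
        nlinarith
    have hlog : ∀ n : ℕ, ((n:ℝ) + 1) * Real.log 2 ≤ Real.log (τ (n + m)) := by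
      intro n
      have h1 : (2:ℝ) ^ (n + 1) ≤ τ (n + m) := by
        have := hpow n
        have h2 : (2:ℝ)^(n+1) = 2 * 2^n := by ring
        nlinarith [pow_pos (by norm_num : (0:ℝ) < 2) n]
      calc ((n:ℝ) + 1) * Real.log 2 = Real.log (2 ^ (n+1)) := by
            rw [Real.log_pow]; push_cast; ring
      _ ≤ Real.log (τ (n + m)) := Real.log_le_log (by positivity) h1
    rw [← summable_nat_add_iff m]
    have hsum : Summable (fun n : ℕ => (1 / Real.log 2 ^ 2) * (1 / ((n:ℝ) + 1) ^ 2)) := by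
      apply Summable.mul_left
      have h := (Real.summable_one_div_nat_pow (p := 2)).mpr (by norm_num)
      have := (summable_nat_add_iff (f := fun n : ℕ => 1 / (n:ℝ) ^ 2) 1).mpr h
      apply this.congr
      intro n
      push_cast
      ring
    apply Summable.of_nonneg_of_le (fun n => hf_nonneg (n + m)) _ hsum
    intro n
    have hLn := hlog n
    have hL2 : (0:ℝ) < Real.log 2 := Real.log_pos (by norm_num)
    have hσle : (σ (n + m) : ℝ) ≤ τ (n + m + 1) := by
      rw [hτsucc]
      linarith [hτpos (n + m)]
    have hLp := hLpos (n + m)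
    have ht'p := hτpos (n + m + 1)
    have hsp : (0:ℝ) < σ (n + m) := lt_of_lt_of_le one_pos (hσ1 (n + m))
    show (1 / Real.log (τ (n+m)) ^ 2) * (σ (n+m) : ℝ) / τ (n+m+1) ≤
        (1 / Real.log 2 ^ 2) * (1 / ((n:ℝ) + 1) ^ 2)
    have step1 : (1 / Real.log (τ (n+m)) ^ 2) * (σ (n+m) : ℝ) / τ (n+m+1) ≤
        1 / Real.log (τ (n+m)) ^ 2 := by
      rw [div_le_iff₀ ht'p]
      have h1 : (0:ℝ) < 1 / Real.log (τ (n+m)) ^ 2 := by positivity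
      nlinarith
    have step2 : 1 / Real.log (τ (n+m)) ^ 2 ≤ 1 / (((n:ℝ)+1) * Real.log 2) ^ 2 := by
      apply one_div_le_one_div_of_le (by positivity)
      exact pow_le_pow_left₀ (by positivity) hLn 2
    have step3 : 1 / (((n:ℝ)+1) * Real.log 2) ^ 2 =
        (1 / Real.log 2 ^ 2) * (1 / ((n:ℝ) + 1) ^ 2) := by
      rw [mul_pow, one_div, mul_inv, one_div, one_div, mul_comm]
    linarith [step3 ▸ step2]
end
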